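/- arXiv:2308.14335 — 4 statements merged into one kernel-verified Lean document; each statement's English description precedes it below -/
import Mathlib

section
/- Suppose f minimizes over H the functional h ↦ (1/n)Σ_{i=1}^n (ℓ_i(h) − Y_i)² + λ‖h‖² and g minimizes over H the functional h ↦ (1/n)Σ_{i=1}^n (ℓ̃_i(h) − Y_i)² + λ‖h‖². Then ‖f − g‖² ≤ (1/λ)·[ (1/n)Σ_{i=1}^n ( ℓ̃_i(f−g)·ℓ̃_i(f) − ℓ_i(f−g)·ℓ_i(f) ) + (1/n)Σ_{i=1}^n Y_i·( ℓ_i(f−g) − ℓ̃_i(f−g) ) ]. -/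
open scoped BigOperators

lemma stat_aux {H : Type*} [NormedAddCommGroup H] [InnerProductSpace ℝ H]
    (n : ℕ) (lam : ℝ) (hlam : 0 < lam)
    (Y : Fin n → ℝ) (l : Fin n → H →L[ℝ] ℝ) (f : H)
    (hf : ∀ h : H,
      (1 / (n : ℝ)) * ∑ i, (l i f - Y i) ^ 2 + lam * ‖f‖ ^ 2 ≤
        (1 / (n : ℝ)) * ∑ i, (l i h - Y i) ^ 2 + lam * ‖h‖ ^ 2) (v : H) :
    (1 / (n : ℝ)) * ∑ i, (l i f - Y i) * (l i v) + lam * (inner ℝ f v : ℝ) = 0 := by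
  set A : ℝ := (1 / (n : ℝ)) * ∑ i, (l i f - Y i) * (l i v) + lam * (inner ℝ f v : ℝ) with hA
  set B : ℝ := (1 / (n : ℝ)) * ∑ i, (l i v) ^ 2 + lam * ‖v‖ ^ 2 with hB
  have hBnn : 0 ≤ B := by
    apply add_nonneg
    · apply mul_nonneg (by positivity)
      exact Finset.sum_nonneg fun i _ => sq_nonneg _
    · positivity
  have key : ∀ t : ℝ, 0 ≤ t * (2 * A) + t ^ 2 * B := by
    intro t
    have hsum : ∀ i : Fin n, (l i (f + t • v) - Y i) ^ 2 =
        (l i f - Y i) ^ 2 + 2 * t * ((l i f - Y i) * (l i v)) + t ^ 2 * (l i v) ^ 2 := by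
      intro i
      simp only [map_add, map_smul, smul_eq_mul]
      ring
    have hnorm : ‖f + t • v‖ ^ 2 = ‖f‖ ^ 2 + 2 * t * (inner ℝ f v : ℝ) + t ^ 2 * ‖v‖ ^ 2 := by
      rw [norm_add_sq_real, real_inner_smul_right, norm_smul, Real.norm_eq_abs, mul_pow, sq_abs]
      ring
    have expand : (1 / (n : ℝ)) * ∑ i, (l i (f + t • v) - Y i) ^ 2 + lam * ‖f + t • v‖ ^ 2 =
        ((1 / (n : ℝ)) * ∑ i, (l i f - Y i) ^ 2 + lam * ‖f‖ ^ 2) + (t * (2 * A) + t ^ 2 * B) := by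
      rw [Finset.sum_congr rfl fun i _ => hsum i, Finset.sum_add_distrib, Finset.sum_add_distrib,
        ← Finset.mul_sum, ← Finset.mul_sum, hnorm, hA, hB]
      ring
    have h := hf (f + t • v)
    rw [expand] at h
    exact (le_add_iff_nonneg_right _).mp h
  have h1 : (0 : ℝ) < 2 * B + 1 := by linarith
  have h0 := key (-(2 * A) / (2 * B + 1))
  have h5 : (-(2 * A) / (2 * B + 1) * (2 * A) + (-(2 * A) / (2 * B + 1)) ^ 2 * B)
      * (2 * B + 1) ^ 2 = -(2 * A) ^ 2 * (B + 1) := by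
    field_simp
    ring
  have h4 : 0 ≤ (-(2 * A) / (2 * B + 1) * (2 * A) + (-(2 * A) / (2 * B + 1)) ^ 2 * B)
      * (2 * B + 1) ^ 2 := mul_nonneg h0 (by positivity)
  rw [h5] at h4
  have hAsq : A ^ 2 ≤ 0 := by nlinarith
  have : A ^ 2 = 0 := le_antisymm hAsq (sq_nonneg A)
  exact pow_eq_zero_iff two_ne_zero |>.mp this

/-- Let `H` be a real Hilbert space, `ℓ_i, ℓ̃_i : H → ℝ` continuous linear functionals,
`Y_i ∈ ℝ`, `λ > 0`.  If `f` minimizes `h ↦ (1/n)∑ (ℓ_i(h) − Y_i)² + λ‖h‖²` and `g` minimizes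
`h ↦ (1/n)∑ (ℓ̃_i(h) − Y_i)² + λ‖h‖²`, then
`‖f − g‖² ≤ (1/λ)[(1/n)∑ (ℓ̃_i(f−g)ℓ̃_i(f) − ℓ_i(f−g)ℓ_i(f)) + (1/n)∑ Y_i(ℓ_i(f−g) − ℓ̃_i(f−g))]`. -/
theorem statement4 {H : Type*} [NormedAddCommGroup H] [InnerProductSpace ℝ H]
    [CompleteSpace H] (n : ℕ) (hn : 1 ≤ n) (lam : ℝ) (hlam : 0 < lam)
    (Y : Fin n → ℝ) (l lt : Fin n → H →L[ℝ] ℝ) (f g : H)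
    (hf : ∀ h : H,
      (1 / (n : ℝ)) * ∑ i, (l i f - Y i) ^ 2 + lam * ‖f‖ ^ 2 ≤
        (1 / (n : ℝ)) * ∑ i, (l i h - Y i) ^ 2 + lam * ‖h‖ ^ 2)
    (hg : ∀ h : H,
      (1 / (n : ℝ)) * ∑ i, (lt i g - Y i) ^ 2 + lam * ‖g‖ ^ 2 ≤
        (1 / (n : ℝ)) * ∑ i, (lt i h - Y i) ^ 2 + lam * ‖h‖ ^ 2) :
    ‖f - g‖ ^ 2 ≤
      (1 / lam) *
        ((1 / (n : ℝ)) * ∑ i, (lt i (f - g) * lt i f - l i (f - g) * l i f) +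
          (1 / (n : ℝ)) * ∑ i, Y i * (l i (f - g) - lt i (f - g))) := by
  have Ef := stat_aux n lam hlam Y l f hf (f - g)
  have Eg := stat_aux n lam hlam Y lt g hg (f - g)
  have hv : ‖f - g‖ ^ 2 = (inner ℝ f (f - g) : ℝ) - (inner ℝ g (f - g) : ℝ) := by
    rw [← real_inner_self_eq_norm_sq, inner_sub_left]
  have hsum : ∑ i, (lt i (f - g) * lt i f - l i (f - g) * l i f)
        + ∑ i, Y i * (l i (f - g) - lt i (f - g))
      = (∑ i, (lt i g - Y i) * (lt i (f - g)) - ∑ i, (l i f - Y i) * (l i (f - g)))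
        + ∑ i, (lt i (f - g)) ^ 2 := by
    rw [← Finset.sum_add_distrib, ← Finset.sum_sub_distrib, ← Finset.sum_add_distrib]
    apply Finset.sum_congr rfl
    intro i _
    simp only [map_sub]
    ring
  have key : lam * ‖f - g‖ ^ 2 + (1 / (n : ℝ)) * ∑ i, (lt i (f - g)) ^ 2 =
      (1 / (n : ℝ)) * ∑ i, (lt i (f - g) * lt i f - l i (f - g) * l i f) +
        (1 / (n : ℝ)) * ∑ i, Y i * (l i (f - g) - lt i (f - g)) := by
    linear_combination lam * hv + Ef - Eg - (1 / (n : ℝ)) * hsum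
  have hsq : 0 ≤ (1 / (n : ℝ)) * ∑ i, (lt i (f - g)) ^ 2 :=
    mul_nonneg (by positivity) (Finset.sum_nonneg fun i _ => sq_nonneg _)
  have hle : lam * ‖f - g‖ ^ 2 ≤
      (1 / (n : ℝ)) * ∑ i, (lt i (f - g) * lt i f - l i (f - g) * l i f) +
        (1 / (n : ℝ)) * ∑ i, Y i * (l i (f - g) - lt i (f - g)) := by linarith
  calc ‖f - g‖ ^ 2 = (1 / lam) * (lam * ‖f - g‖ ^ 2) := by field_simp
    _ ≤ _ := mul_le_mul_of_nonneg_left hle (by positivity)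
end

section
/- Let H be a real separable Hilbert space, B > 0, and let ξ_1, ξ_2, … be i.i.d. Bochner-integrable H-valued random elements with E[ξ_j] = 0 and ‖ξ_j‖_H ≤ B almost surely. Then for every s > 0 there exists a constant c, depending only on s and B, such that for every N ≥ 1, E[ ‖ (1/N) Σ_{j=1}^N ξ_j ‖_H^s ] ≤ c N^{−s/2}. -/
open MeasureTheory ProbabilityTheory Finset

lemma aux_choose_le (n k : ℕ) : n.choose k ≤ 2 ^ n := by
  rcases le_or_gt k n with h | h
  · calc n.choose k ≤ ∑ m ∈ Finset.range (n+1), n.choose m :=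
        Finset.single_le_sum (fun _ _ => Nat.zero_le _) (Finset.mem_range.mpr (Nat.lt_succ_of_le h))
    _ = 2 ^ n := Nat.sum_range_choose n
  · simp [Nat.choose_eq_zero_of_lt h]

lemma aux_pow_le {x : ℝ} (hx : 0 ≤ x) {j n : ℕ} (h : j ≤ n) : x ^ j ≤ 1 + x ^ n := by
  rcases le_or_gt x 1 with h1 | h1
  · have := pow_le_one₀ hx h1 (n := j)
    nlinarith [pow_nonneg hx n]
  · have := pow_le_pow_right₀ h1.le h
    nlinarith

lemma aux_add_pow_le {x : ℝ} (hx : 0 ≤ x) (j : ℕ) : (x + 1) ^ j ≤ 2 ^ j * (x ^ j + 1) := by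
  rcases le_or_gt x 1 with h1 | h1
  · calc (x+1)^j ≤ 2^j := pow_le_pow_left₀ (by linarith) (by linarith) j
      _ ≤ 2^j * (x^j+1) := by nlinarith [pow_nonneg hx j, pow_pos (show (0:ℝ) < 2 by norm_num) j]
  · calc (x+1)^j ≤ (2*x)^j := pow_le_pow_left₀ (by linarith) (by linarith) j
      _ = 2^j * x^j := mul_pow 2 x j
      _ ≤ 2^j * (x^j+1) := by nlinarith [pow_pos (show (0:ℝ) < 2 by norm_num) j]

lemma aux_taylor (m : ℕ) (B : ℝ) (hB : 0 < B) :
    ∃ K : ℝ, 0 < K ∧ ∀ x r : ℝ, 0 ≤ x → |r| ≤ 2*B*x + B^2 →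
      (x^2 + r)^(m+1) ≤ (x^2)^(m+1) + ((m:ℝ)+1) * (x^2)^m * r + K * (1 + x^(2*m)) := by
  set E : ℝ := 2*B + B^2 with hE
  have hE0 : 0 < E := by positivity
  set G : ℝ := 2*E + 2 with hG
  have hG1 : (1:ℝ) ≤ G := by nlinarith
  have hG0 : (0:ℝ) ≤ G := by linarith
  refine ⟨(m:ℝ) * 2^(m+2) * G^(m+1) + 1, by positivity, fun x r hx hr => ?_⟩
  have habs : 0 ≤ 2*B*x + B^2 := by positivity
  have hrE : |r| ≤ E * (x + 1) := by
    refine hr.trans ?_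
    rw [hE]; nlinarith
  have key : (x^2 + r)^(m+1)
      = ∑ k ∈ Finset.range (m+2), r^k * (x^2)^(m+1-k) * ((m+1).choose k : ℝ) := by
    rw [add_comm]
    exact add_pow r (x^2) (m+1)
  rw [key, Finset.sum_range_succ', Finset.sum_range_succ']
  simp only [pow_zero, one_mul, Nat.choose_zero_right, Nat.cast_one, mul_one, pow_one,
    zero_add, Nat.add_sub_cancel, Nat.sub_zero, Nat.choose_one_right, Nat.cast_add]
  have hxt : 0 ≤ x^(2*m) := by positivity
  have hsum : ∑ k ∈ Finset.range m, r^(k+1+1) * (x^2)^(m+1-(k+1+1)) * ((m+1).choose (k+1+1) : ℝ)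
      ≤ ((m:ℝ) * 2^(m+2) * G^(m+1)) * (1 + x^(2*m)) := by
    have hterm : ∀ k ∈ Finset.range m,
        r^(k+1+1) * (x^2)^(m+1-(k+1+1)) * ((m+1).choose (k+1+1) : ℝ)
        ≤ 2^(m+1) * G^(m+1) * (2 * (1 + x^(2*m))) := by
      intro k hk
      have hkm : k < m := Finset.mem_range.mp hk
      have e1 : m + 1 - (k+1+1) = m - 1 - k := by omega
      have hr2 : r^(k+2) ≤ G^(m+1) * (x^(k+2) + 1) := by
        calc r^(k+2) ≤ |r|^(k+2) := by
              rw [← abs_pow]; exact le_abs_self _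
          _ ≤ (E*(x+1))^(k+2) := pow_le_pow_left₀ (abs_nonneg r) hrE (k+2)
          _ = E^(k+2) * (x+1)^(k+2) := mul_pow E (x+1) (k+2)
          _ ≤ E^(k+2) * (2^(k+2) * (x^(k+2) + 1)) := by
              have := aux_add_pow_le hx (k+2)
              have hEp : 0 ≤ E^(k+2) := by positivity
              nlinarith
          _ = (2*E)^(k+2) * (x^(k+2) + 1) := by rw [mul_pow]; ring
          _ ≤ G^(m+1) * (x^(k+2) + 1) := by
              have h1 : (2*E)^(k+2) ≤ G^(k+2) := pow_le_pow_left₀ (by linarith) (by linarith) _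
              have h2 : G^(k+2) ≤ G^(m+1) := pow_le_pow_right₀ hG1 (by omega)
              have : 0 ≤ x^(k+2) + 1 := by positivity
              nlinarith
      have hxpow : (x^2)^(m-1-k) = x^(2*(m-1-k)) := by rw [← pow_mul]
      have hprod : (x^(k+2) + 1) * (x^2)^(m-1-k) ≤ 2 * (1 + x^(2*m)) := by
        rw [hxpow]
        have h1 : x^(k+2) * x^(2*(m-1-k)) = x^(2*m-k) := by
          rw [← pow_add]; congr 1; omega
        have h2 : x^(2*m-k) ≤ 1 + x^(2*m) := aux_pow_le hx (by omega)
        have h3 : x^(2*(m-1-k)) ≤ 1 + x^(2*m) := aux_pow_le hx (by omega)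
        nlinarith [pow_nonneg hx (2*(m-1-k)), pow_nonneg hx (k+2)]
      have hchoose : ((m+1).choose (k+1+1) : ℝ) ≤ 2^(m+1) := by
        calc ((m+1).choose (k+1+1) : ℝ) ≤ ((2^(m+1) : ℕ) : ℝ) := by
              exact_mod_cast Nat.cast_le.mpr (aux_choose_le (m+1) (k+1+1))
          _ = 2^(m+1) := by push_cast; ring
      rw [e1]
      have hG2 : 0 ≤ G^(m+1) := by positivity
      have hxk : 0 ≤ (x^2)^(m-1-k) := by positivity
      have hchoose0 : (0:ℝ) ≤ ((m+1).choose (k+1+1) : ℝ) := Nat.cast_nonneg _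
      calc r^(k+1+1) * (x^2)^(m-1-k) * ((m+1).choose (k+1+1) : ℝ)
          ≤ (G^(m+1) * (x^(k+2) + 1)) * (x^2)^(m-1-k) * 2^(m+1) := by
            have hr0 : r^(k+1+1) * (x^2)^(m-1-k) ≤ (G^(m+1) * (x^(k+2)+1)) * (x^2)^(m-1-k) :=
              mul_le_mul_of_nonneg_right hr2 hxk
            have step1 : r^(k+1+1) * (x^2)^(m-1-k) * ((m+1).choose (k+1+1) : ℝ)
                ≤ (G^(m+1) * (x^(k+2)+1)) * (x^2)^(m-1-k) * ((m+1).choose (k+1+1) : ℝ) :=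
              mul_le_mul_of_nonneg_right hr0 hchoose0
            refine step1.trans ?_
            have hpos : 0 ≤ (G^(m+1) * (x^(k+2)+1)) * (x^2)^(m-1-k) := by positivity
            exact mul_le_mul_of_nonneg_left hchoose hpos
        _ = (G^(m+1) * ((x^(k+2) + 1) * (x^2)^(m-1-k))) * 2^(m+1) := by ring
        _ ≤ (G^(m+1) * (2 * (1 + x^(2*m)))) * 2^(m+1) := by
            have := mul_le_mul_of_nonneg_left hprod hG2
            nlinarith [pow_pos (show (0:ℝ) < 2 by norm_num) (m+1)]
        _ = 2^(m+1) * G^(m+1) * (2 * (1 + x^(2*m))) := by ring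
    calc ∑ k ∈ Finset.range m, r^(k+1+1) * (x^2)^(m+1-(k+1+1)) * ((m+1).choose (k+1+1) : ℝ)
        ≤ ∑ _k ∈ Finset.range m, 2^(m+1) * G^(m+1) * (2 * (1 + x^(2*m))) :=
          Finset.sum_le_sum hterm
      _ = (m:ℝ) * (2^(m+1) * G^(m+1) * (2 * (1 + x^(2*m)))) := by
          rw [Finset.sum_const, Finset.card_range]; simp [nsmul_eq_mul]
      _ ≤ ((m:ℝ) * 2^(m+2) * G^(m+1)) * (1 + x^(2*m)) := by
          have hm0 : (0:ℝ) ≤ (m:ℝ) := Nat.cast_nonneg m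
          have : (2:ℝ)^(m+2) = 2 * 2^(m+1) := by ring
          rw [this]; nlinarith [pow_pos (show (0:ℝ) < 2 by norm_num) (m+1),
            mul_nonneg (mul_nonneg hm0 (pow_nonneg (show (0:ℝ) ≤ 2 by norm_num) (m+1))) hG0]
  linarith [hsum, hxt]


section InnerZero


variable {H : Type*} [NormedAddCommGroup H] [InnerProductSpace ℝ H] [CompleteSpace H]
  [SecondCountableTopology H] [MeasurableSpace H] [BorelSpace H]
  {Θ : Type*} [MeasurableSpace Θ]

lemma aux_inner_zero (P : Measure Θ) [IsProbabilityMeasure P]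
    (V Y : Θ → H) (hV : Measurable V) (hY : Measurable Y)
    (hInd : IndepFun V Y P) (CV CY : ℝ)
    (hVb : ∀ᵐ ω ∂P, ‖V ω‖ ≤ CV) (hYb : ∀ᵐ ω ∂P, ‖Y ω‖ ≤ CY)
    (hY0 : ∫ ω, Y ω ∂P = 0) :
    ∫ ω, (inner ℝ (V ω) (Y ω) : ℝ) ∂P = 0 := by
  have hmap : P.map (fun ω => (V ω, Y ω)) = (P.map V).prod (P.map Y) :=
    (indepFun_iff_map_prod_eq_prod_map_map hV.aemeasurable hY.aemeasurable).mp hInd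
  have hpair : Measurable fun ω => (V ω, Y ω) := hV.prodMk hY
  have hinner : Continuous fun p : H × H => (inner ℝ p.1 p.2 : ℝ) := continuous_inner
  haveI : IsProbabilityMeasure (P.map V) := Measure.isProbabilityMeasure_map hV.aemeasurable
  haveI : IsProbabilityMeasure (P.map Y) := Measure.isProbabilityMeasure_map hY.aemeasurable
  have hVb' : ∀ᵐ v ∂(P.map V), ‖v‖ ≤ CV :=
    (ae_map_iff hV.aemeasurable (measurableSet_le measurable_norm measurable_const)).mpr hVb
  have hYb' : ∀ᵐ y ∂(P.map Y), ‖y‖ ≤ CY :=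
    (ae_map_iff hY.aemeasurable (measurableSet_le measurable_norm measurable_const)).mpr hYb
  have hprodb : ∀ᵐ p ∂((P.map V).prod (P.map Y)), ‖p.1‖ ≤ CV ∧ ‖p.2‖ ≤ CY := by
    rw [Measure.ae_prod_iff_ae_ae]
    · filter_upwards [hVb'] with v hv
      filter_upwards [hYb'] with y hy
      exact ⟨hv, hy⟩
    · exact ((measurableSet_le measurable_fst.norm measurable_const).inter
        (measurableSet_le measurable_snd.norm measurable_const))
  have hIntProd : Integrable (fun p : H × H => (inner ℝ p.1 p.2 : ℝ))
      ((P.map V).prod (P.map Y)) := by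
    refine (integrable_const (CV*CY)).mono' hinner.aestronglyMeasurable ?_
    filter_upwards [hprodb] with p hp
    calc ‖(inner ℝ p.1 p.2 : ℝ)‖ ≤ ‖p.1‖ * ‖p.2‖ := norm_inner_le_norm _ _
      _ ≤ CV * CY := mul_le_mul hp.1 hp.2 (norm_nonneg _) ((norm_nonneg _).trans hp.1)
  have hint_id : Integrable (fun y : H => y) (P.map Y) :=
    (integrable_const CY).mono' measurable_id.aestronglyMeasurable hYb'
  have hY0' : ∫ y, y ∂(P.map Y) = 0 := by
    rw [show (fun y : H => y) = id from rfl, integral_map hY.aemeasurable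
      measurable_id.aestronglyMeasurable]
    exact hY0
  calc ∫ ω, (inner ℝ (V ω) (Y ω) : ℝ) ∂P
      = ∫ p, (inner ℝ p.1 p.2 : ℝ) ∂(P.map (fun ω => (V ω, Y ω))) :=
        (integral_map hpair.aemeasurable hinner.aestronglyMeasurable).symm
    _ = ∫ v, ∫ y, (inner ℝ v y : ℝ) ∂(P.map Y) ∂(P.map V) := by
        rw [hmap]
        exact integral_prod _ hIntProd
    _ = 0 := by
        have : ∀ v : H, ∫ y, (inner ℝ v y : ℝ) ∂(P.map Y) = 0 := fun v => by
          rw [integral_inner hint_id v, hY0', inner_zero_right]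
        simp [this]

end InnerZero

lemma aux_moment (B : ℝ) (hB : 0 < B) (m : ℕ) :
    ∃ C : ℝ, 0 < C ∧
      ∀ (H : Type*) [NormedAddCommGroup H] [InnerProductSpace ℝ H] [CompleteSpace H]
        [TopologicalSpace.SeparableSpace H] [MeasurableSpace H] [BorelSpace H]
        (Θ : Type*) [MeasurableSpace Θ] (P : Measure Θ) [IsProbabilityMeasure P]
        (ξ : ℕ → Θ → H),
        (∀ j, Measurable (ξ j)) →
        iIndepFun ξ P →
        (∀ j, ∫ ω, ξ j ω ∂P = 0) →
        (∀ j, ∀ᵐ ω ∂P, ‖ξ j ω‖ ≤ B) →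
        ∀ N : ℕ, ∫ ω, ‖∑ j ∈ Finset.range N, ξ j ω‖ ^ (2*m) ∂P ≤ C * ((N:ℝ)+1)^m := by
  induction m with
  | zero =>
    refine ⟨1, one_pos, ?_⟩
    intro H _ _ _ _ _ _ Θ _ P _ ξ _ _ _ _ N
    simp
  | succ m IH =>
    obtain ⟨C, hC, hCle⟩ := IH
    obtain ⟨K, hK, hKle⟩ := aux_taylor m B hB
    set A : ℝ := ((m:ℝ)+1)*B^2*C + K*(1+C) with hA
    have hA0 : 0 < A := by positivity
    refine ⟨A, hA0, ?_⟩
    intro H _ _ _ _ _ _ Θ _ P _ ξ hmeas hindep hmean hbound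
    haveI : SecondCountableTopology H := UniformSpace.secondCountable_of_separable H
    set S : ℕ → Θ → H := fun N ω => ∑ j ∈ Finset.range N, ξ j ω with hS
    have hSmeas : ∀ N, Measurable (S N) := fun N =>
      Finset.measurable_sum _ (fun j _ => hmeas j)
    have hae : ∀ᵐ ω ∂P, ∀ j, ‖ξ j ω‖ ≤ B := ae_all_iff.mpr hbound
    have hSbd : ∀ N, ∀ᵐ ω ∂P, ‖S N ω‖ ≤ (N:ℝ)*B := by
      intro N
      filter_upwards [hae] with ω hω
      calc ‖S N ω‖ ≤ ∑ j ∈ Finset.range N, ‖ξ j ω‖ := norm_sum_le _ _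
        _ ≤ ∑ _j ∈ Finset.range N, B := Finset.sum_le_sum (fun j _ => hω j)
        _ = (N:ℝ)*B := by rw [Finset.sum_const, Finset.card_range, nsmul_eq_mul]
    have hIntPow : ∀ (N p : ℕ), Integrable (fun ω => ‖S N ω‖^p) P := by
      intro N p
      refine (integrable_const (((N:ℝ)*B)^p)).mono'
        ((hSmeas N).norm.pow_const p).aestronglyMeasurable ?_
      filter_upwards [hSbd N] with ω hω
      rw [Real.norm_eq_abs, abs_pow, abs_norm]
      exact pow_le_pow_left₀ (norm_nonneg _) hω p
    -- the key one-step inequality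
    have key : ∀ N : ℕ,
        ∫ ω, ‖S (N+1) ω‖^(2*(m+1)) ∂P ≤ ∫ ω, ‖S N ω‖^(2*(m+1)) ∂P + A * ((N:ℝ)+1)^m := by
      intro N
      set MN : ℝ := ∫ ω, ‖S N ω‖^(2*m) ∂P with hMN
      have hMN0 : 0 ≤ MN := integral_nonneg (fun ω => by positivity)
      have hMNle : MN ≤ C * ((N:ℝ)+1)^m := hCle H Θ P ξ hmeas hindep hmean hbound N
      -- independence: V vs ξ N
      have hindSN : IndepFun (S N) (ξ N) P := by
        have h0 : IndepFun (∑ j ∈ Finset.range N, ξ j) (ξ N) P :=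
          hindep.indepFun_finset_sum_of_notMem hmeas Finset.notMem_range_self
        have : (∑ j ∈ Finset.range N, ξ j) = S N := by
          funext ω; simp [hS]
        rwa [this] at h0
      set φ : H → H := fun y => (‖y‖^2)^m • y with hφ
      have hφc : Continuous φ := by
        exact ((continuous_norm.pow 2).pow m).smul continuous_id
      set V : Θ → H := fun ω => (‖S N ω‖^2)^m • S N ω with hV
      have hVmeas : Measurable V := hφc.measurable.comp (hSmeas N)
      have hindV : IndepFun V (ξ N) P := by
        have := hindSN.comp hφc.measurable measurable_id
        exact this
      have hVbd : ∀ᵐ ω ∂P, ‖V ω‖ ≤ (((N:ℝ)*B)^2)^m * ((N:ℝ)*B) := by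
        filter_upwards [hSbd N] with ω hω
        have h0 : (0:ℝ) ≤ ‖S N ω‖ := norm_nonneg _
        rw [hV, norm_smul, Real.norm_eq_abs, abs_pow, abs_pow, abs_norm]
        have h1 : (‖S N ω‖^2)^m ≤ (((N:ℝ)*B)^2)^m := by
          apply pow_le_pow_left₀ (by positivity)
          exact pow_le_pow_left₀ h0 hω 2
        have h2 : (0:ℝ) ≤ (‖S N ω‖^2)^m := by positivity
        exact mul_le_mul h1 hω h0 (by positivity)
      have hinner0 : ∫ ω, (inner ℝ (V ω) (ξ N ω) : ℝ) ∂P = 0 :=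
        aux_inner_zero P V (ξ N) hVmeas (hmeas N) hindV _ B hVbd (hbound N) (hmean N)
      -- pointwise inequality
      have hpt : ∀ᵐ ω ∂P, ‖S (N+1) ω‖^(2*(m+1)) ≤
          ‖S N ω‖^(2*(m+1))
          + ((m:ℝ)+1) * ((‖S N ω‖^2)^m * (2 * (inner ℝ (S N ω) (ξ N ω) : ℝ) + ‖ξ N ω‖^2))
          + K * (1 + ‖S N ω‖^(2*m)) := by
        filter_upwards [hbound N] with ω hω
        have hsum : S (N+1) ω = S N ω + ξ N ω := by
          simp [hS, Finset.sum_range_succ]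
        have hnorm : ‖S (N+1) ω‖^2 = ‖S N ω‖^2
            + (2 * (inner ℝ (S N ω) (ξ N ω) : ℝ) + ‖ξ N ω‖^2) := by
          rw [hsum, norm_add_sq_real]; ring
        set x : ℝ := ‖S N ω‖ with hx
        set r : ℝ := 2 * (inner ℝ (S N ω) (ξ N ω) : ℝ) + ‖ξ N ω‖^2 with hr
        have hx0 : 0 ≤ x := norm_nonneg _
        have hrb : |r| ≤ 2*B*x + B^2 := by
          have h1 : |(inner ℝ (S N ω) (ξ N ω) : ℝ)| ≤ x * ‖ξ N ω‖ := abs_real_inner_le_norm _ _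
          have h2 : (0:ℝ) ≤ ‖ξ N ω‖ := norm_nonneg _
          have h3 : ‖ξ N ω‖^2 ≤ B^2 := pow_le_pow_left₀ h2 hω 2
          calc |r| ≤ 2 * |(inner ℝ (S N ω) (ξ N ω) : ℝ)| + ‖ξ N ω‖^2 := by
                rw [hr]
                calc |2 * (inner ℝ (S N ω) (ξ N ω) : ℝ) + ‖ξ N ω‖^2|
                    ≤ |2 * (inner ℝ (S N ω) (ξ N ω) : ℝ)| + |‖ξ N ω‖^2| := abs_add_le _ _
                  _ = 2 * |(inner ℝ (S N ω) (ξ N ω) : ℝ)| + ‖ξ N ω‖^2 := by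
                      rw [abs_mul, abs_of_nonneg (by positivity : (0:ℝ) ≤ ‖ξ N ω‖^2)]
                      norm_num
            _ ≤ 2*B*x + B^2 := by nlinarith
        have hT := hKle x r hx0 hrb
        calc ‖S (N+1) ω‖^(2*(m+1)) = (‖S (N+1) ω‖^2)^(m+1) := pow_mul _ 2 (m+1)
          _ = (x^2 + r)^(m+1) := by rw [hnorm]
          _ ≤ (x^2)^(m+1) + ((m:ℝ)+1) * (x^2)^m * r + K * (1 + x^(2*m)) := hT
          _ = x^(2*(m+1)) + ((m:ℝ)+1) * ((x^2)^m * r) + K * (1 + x^(2*m)) := by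
              rw [← pow_mul]; ring
      -- integrability of the RHS pieces
      have hIntInner : Integrable (fun ω => (‖S N ω‖^2)^m * (inner ℝ (S N ω) (ξ N ω) : ℝ)) P := by
        refine (integrable_const ((((N:ℝ)*B)^2)^m * ((N:ℝ)*B*B))).mono'
          ((((hSmeas N).norm.pow_const 2).pow_const m).mul
            ((hSmeas N).inner (hmeas N))).aestronglyMeasurable ?_
        filter_upwards [hSbd N, hbound N] with ω h1 h2
        have h0 : (0:ℝ) ≤ ‖S N ω‖ := norm_nonneg _
        have hi : |(inner ℝ (S N ω) (ξ N ω) : ℝ)| ≤ ‖S N ω‖ * ‖ξ N ω‖ := abs_real_inner_le_norm _ _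
        rw [Real.norm_eq_abs, abs_mul, abs_pow, abs_pow, abs_norm]
        have hNB0 : (0:ℝ) ≤ (N:ℝ)*B := by positivity
        have e1 : (‖S N ω‖^2)^m ≤ (((N:ℝ)*B)^2)^m := by
          apply pow_le_pow_left₀ (by positivity)
          exact pow_le_pow_left₀ h0 h1 2
        have e2 : |(inner ℝ (S N ω) (ξ N ω) : ℝ)| ≤ ((N:ℝ)*B)*B := by
          refine hi.trans ?_
          exact mul_le_mul h1 h2 (norm_nonneg _) hNB0
        exact mul_le_mul e1 e2 (abs_nonneg _) (by positivity)
      have hIntXi2 : Integrable (fun ω => (‖S N ω‖^2)^m * ‖ξ N ω‖^2) P := by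
        refine (integrable_const ((((N:ℝ)*B)^2)^m * B^2)).mono'
          ((((hSmeas N).norm.pow_const 2).pow_const m).mul
            ((hmeas N).norm.pow_const 2)).aestronglyMeasurable ?_
        filter_upwards [hSbd N, hbound N] with ω h1 h2
        have h0 : (0:ℝ) ≤ ‖S N ω‖ := norm_nonneg _
        rw [Real.norm_eq_abs, abs_mul, abs_pow, abs_pow, abs_pow, abs_norm, abs_norm]
        have e1 : (‖S N ω‖^2)^m ≤ (((N:ℝ)*B)^2)^m := by
          apply pow_le_pow_left₀ (by positivity)
          exact pow_le_pow_left₀ h0 h1 2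
        have e2 : ‖ξ N ω‖^2 ≤ B^2 := pow_le_pow_left₀ (norm_nonneg _) h2 2
        exact mul_le_mul e1 e2 (by positivity) (by positivity)
      have hIntR : Integrable (fun ω =>
          (‖S N ω‖^2)^m * (2 * (inner ℝ (S N ω) (ξ N ω) : ℝ) + ‖ξ N ω‖^2)) P := by
        have : (fun ω => (‖S N ω‖^2)^m * (2 * (inner ℝ (S N ω) (ξ N ω) : ℝ) + ‖ξ N ω‖^2))
            = fun ω => 2 * ((‖S N ω‖^2)^m * (inner ℝ (S N ω) (ξ N ω) : ℝ))
              + (‖S N ω‖^2)^m * ‖ξ N ω‖^2 := by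
          funext ω; ring
        rw [this]
        exact (hIntInner.const_mul 2).add hIntXi2
      -- integrate the pointwise bound
      have hmono : ∫ ω, ‖S (N+1) ω‖^(2*(m+1)) ∂P ≤
          ∫ ω, (‖S N ω‖^(2*(m+1))
            + ((m:ℝ)+1) * ((‖S N ω‖^2)^m * (2 * (inner ℝ (S N ω) (ξ N ω) : ℝ) + ‖ξ N ω‖^2))
            + K * (1 + ‖S N ω‖^(2*m))) ∂P := by
        refine integral_mono_ae (hIntPow (N+1) (2*(m+1))) ?_ hpt
        exact ((hIntPow N (2*(m+1))).add (hIntR.const_mul _)).add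
          (((integrable_const 1).add (hIntPow N (2*m))).const_mul K)
      have iMid : Integrable (fun ω => ((m:ℝ)+1) *
          ((‖S N ω‖^2)^m * (2 * (inner ℝ (S N ω) (ξ N ω) : ℝ) + ‖ξ N ω‖^2))) P :=
        hIntR.const_mul _
      have iTail : Integrable (fun ω => K * (1 + ‖S N ω‖^(2*m))) P :=
        ((integrable_const 1).add (hIntPow N (2*m))).const_mul K
      have iHead : Integrable (fun ω => ‖S N ω‖^(2*(m+1)) + ((m:ℝ)+1) *
          ((‖S N ω‖^2)^m * (2 * (inner ℝ (S N ω) (ξ N ω) : ℝ) + ‖ξ N ω‖^2))) P :=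
        (hIntPow N (2*(m+1))).add iMid
      have hsplit : ∫ ω, (‖S N ω‖^(2*(m+1))
            + ((m:ℝ)+1) * ((‖S N ω‖^2)^m * (2 * (inner ℝ (S N ω) (ξ N ω) : ℝ) + ‖ξ N ω‖^2))
            + K * (1 + ‖S N ω‖^(2*m))) ∂P
          = ∫ ω, ‖S N ω‖^(2*(m+1)) ∂P
            + ((m:ℝ)+1) * (∫ ω, (‖S N ω‖^2)^m * (2 * (inner ℝ (S N ω) (ξ N ω) : ℝ) + ‖ξ N ω‖^2) ∂P)
            + K * (1 + MN) := by
        rw [integral_add iHead iTail,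
          integral_add (hIntPow N (2*(m+1))) iMid,
          integral_const_mul, integral_const_mul,
          integral_add (integrable_const 1) (hIntPow N (2*m))]
        simp [hMN]
      -- evaluate/bound the middle integral
      have hmid : ∫ ω, (‖S N ω‖^2)^m * (2 * (inner ℝ (S N ω) (ξ N ω) : ℝ) + ‖ξ N ω‖^2) ∂P
          ≤ B^2 * MN := by
        have iA : Integrable (fun ω => 2 * ((‖S N ω‖^2)^m * (inner ℝ (S N ω) (ξ N ω) : ℝ))) P :=
          hIntInner.const_mul 2
        have hsplit2 : ∫ ω, (‖S N ω‖^2)^m * (2 * (inner ℝ (S N ω) (ξ N ω) : ℝ) + ‖ξ N ω‖^2) ∂P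
            = 2 * (∫ ω, (‖S N ω‖^2)^m * (inner ℝ (S N ω) (ξ N ω) : ℝ) ∂P)
              + ∫ ω, (‖S N ω‖^2)^m * ‖ξ N ω‖^2 ∂P := by
          have e : ∫ ω, (‖S N ω‖^2)^m * (2 * (inner ℝ (S N ω) (ξ N ω) : ℝ) + ‖ξ N ω‖^2) ∂P
              = ∫ ω, (2 * ((‖S N ω‖^2)^m * (inner ℝ (S N ω) (ξ N ω) : ℝ))
                + (‖S N ω‖^2)^m * ‖ξ N ω‖^2) ∂P := by
            congr 1; funext ω; ring
          rw [e, integral_add iA hIntXi2, integral_const_mul]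
        have hzero : ∫ ω, (‖S N ω‖^2)^m * (inner ℝ (S N ω) (ξ N ω) : ℝ) ∂P = 0 := by
          have : (fun ω => (‖S N ω‖^2)^m * (inner ℝ (S N ω) (ξ N ω) : ℝ))
              = fun ω => (inner ℝ (V ω) (ξ N ω) : ℝ) := by
            funext ω
            rw [hV, real_inner_smul_left]
          rw [this, hinner0]
        have hle2 : ∫ ω, (‖S N ω‖^2)^m * ‖ξ N ω‖^2 ∂P ≤ B^2 * MN := by
          have : ∫ ω, (‖S N ω‖^2)^m * ‖ξ N ω‖^2 ∂P ≤ ∫ ω, B^2 * ‖S N ω‖^(2*m) ∂P := by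
            refine integral_mono_ae hIntXi2 ((hIntPow N (2*m)).const_mul _) ?_
            filter_upwards [hbound N] with ω hω
            have e2 : ‖ξ N ω‖^2 ≤ B^2 := pow_le_pow_left₀ (norm_nonneg _) hω 2
            have e3 : (‖S N ω‖^2)^m = ‖S N ω‖^(2*m) := (pow_mul _ 2 m).symm
            rw [← e3]
            have h2 : (0:ℝ) ≤ (‖S N ω‖^2)^m := by positivity
            nlinarith
          rwa [integral_const_mul] at this
        rw [hsplit2, hzero]
        linarith
      -- conclude the one-step bound
      have hpow1 : (1:ℝ) ≤ ((N:ℝ)+1)^m := one_le_pow₀ (by linarith [Nat.cast_nonneg (α := ℝ) N])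
      rw [hsplit] at hmono
      have c0 : ((m:ℝ)+1) * (∫ ω, (‖S N ω‖^2)^m *
          (2 * (inner ℝ (S N ω) (ξ N ω) : ℝ) + ‖ξ N ω‖^2) ∂P)
          ≤ ((m:ℝ)+1) * (B^2 * MN) := mul_le_mul_of_nonneg_left hmid (by positivity)
      have c1 : B^2*MN ≤ B^2*(C*((N:ℝ)+1)^m) := mul_le_mul_of_nonneg_left hMNle (by positivity)
      have c1' : ((m:ℝ)+1)*(B^2*MN) ≤ ((m:ℝ)+1)*(B^2*(C*((N:ℝ)+1)^m)) :=
        mul_le_mul_of_nonneg_left c1 (by positivity)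
      have c2 : K*(1+MN) ≤ K*(((N:ℝ)+1)^m + C*((N:ℝ)+1)^m) :=
        mul_le_mul_of_nonneg_left (by linarith) hK.le
      rw [hA]
      linarith [hmono, c0, c1', c2]
    -- iterate the one-step bound
    have hM0 : ∫ ω, ‖S 0 ω‖^(2*(m+1)) ∂P = 0 := by
      simp [hS]
    have hrec : ∀ N : ℕ, ∫ ω, ‖S N ω‖^(2*(m+1)) ∂P ≤ A * (N:ℝ) * ((N:ℝ)+1)^m := by
      intro N
      induction N with
      | zero => simp [hM0]
      | succ n ih =>
        have h1 := key n
        have hp0 : (0:ℝ) ≤ ((n:ℝ)+1)^m := by positivity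
        have h2 : ((n:ℝ)+1)^m ≤ ((n:ℝ)+1+1)^m := pow_le_pow_left₀ (by positivity) (by linarith) m
        have h3 : ∫ ω, ‖S (n+1) ω‖^(2*(m+1)) ∂P ≤ A * ((n:ℝ)+1) * ((n:ℝ)+1)^m := by
          linarith
        refine h3.trans ?_
        push_cast
        have h4 : (0:ℝ) ≤ A * ((n:ℝ)+1) := by positivity
        exact mul_le_mul_of_nonneg_left h2 h4
    intro N
    have h := hrec N
    have hle : A * (N:ℝ) * ((N:ℝ)+1)^m ≤ A * ((N:ℝ)+1)^(m+1) := by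
      have hp0 : (0:ℝ) ≤ ((N:ℝ)+1)^m := by positivity
      calc A * (N:ℝ) * ((N:ℝ)+1)^m ≤ A * ((N:ℝ)+1) * ((N:ℝ)+1)^m :=
            mul_le_mul_of_nonneg_right
              (mul_le_mul_of_nonneg_left (by linarith [Nat.cast_nonneg (α := ℝ) N]) hA0.le) hp0
        _ = A * ((N:ℝ)+1)^(m+1) := by ring
    calc ∫ ω, ‖∑ j ∈ Finset.range N, ξ j ω‖ ^ (2*(m+1)) ∂P
        = ∫ ω, ‖S N ω‖^(2*(m+1)) ∂P := by simp only [hS]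
      _ ≤ A * (N:ℝ) * ((N:ℝ)+1)^m := h
      _ ≤ A * ((N:ℝ)+1)^(m+1) := hle

lemma aux_rpow_le {x s t : ℝ} (hx : 0 ≤ x) (hs : 0 ≤ s) (hst : s ≤ t) :
    x ^ s ≤ 1 + x ^ t := by
  rcases le_or_gt x 1 with h1 | h1
  · have h2 : x ^ s ≤ 1 := Real.rpow_le_one hx h1 hs
    have h3 : 0 ≤ x ^ t := Real.rpow_nonneg hx t
    linarith
  · have h2 : x ^ s ≤ x ^ t := Real.rpow_le_rpow_of_exponent_le h1.le hst
    have h3 : (0:ℝ) ≤ x ^ s := Real.rpow_nonneg hx s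
    linarith

/-- Let `H` be a real separable Hilbert space, `B > 0`, and `ξ_1, ξ_2, …` i.i.d.
Bochner-integrable `H`-valued random elements with `E[ξ_j] = 0` and `‖ξ_j‖ ≤ B` a.s.
Then for every `s > 0` there is a constant `c`, depending only on `s` and `B`, such that
for every `N ≥ 1`, `E‖(1/N)∑_{j=1}^N ξ_j‖^s ≤ c N^{−s/2}`. -/
theorem statement6 (s B : ℝ) (hs : 0 < s) (hB : 0 < B) :
    ∃ c : ℝ, 0 < c ∧
      ∀ (H : Type*) [NormedAddCommGroup H] [InnerProductSpace ℝ H] [CompleteSpace H]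
        [TopologicalSpace.SeparableSpace H] [MeasurableSpace H] [BorelSpace H]
        (Θ : Type*) [MeasurableSpace Θ] (P : Measure Θ) [IsProbabilityMeasure P]
        (ξ : ℕ → Θ → H),
        (∀ j, Measurable (ξ j)) →
        iIndepFun ξ P →
        (∀ j, Measure.map (ξ j) P = Measure.map (ξ 0) P) →
        (∀ j, Integrable (ξ j) P) →
        (∀ j, ∫ ω, ξ j ω ∂P = 0) →
        (∀ j, ∀ᵐ ω ∂P, ‖ξ j ω‖ ≤ B) →
        ∀ N : ℕ, 1 ≤ N →
          ∫ ω, ‖(N : ℝ)⁻¹ • ∑ j ∈ Finset.range N, ξ j ω‖ ^ s ∂P ≤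
            c * ((N : ℝ) ^ (-(s / 2)) : ℝ) := by
  set m : ℕ := ⌈s⌉₊ with hm
  have hsm : s ≤ ((2*m : ℕ) : ℝ) := by
    have h1 : s ≤ (m:ℝ) := Nat.le_ceil s
    have h2 : (m:ℝ) ≤ ((2*m : ℕ):ℝ) := by push_cast; linarith [Nat.cast_nonneg (α := ℝ) m]
    linarith
  obtain ⟨C, hC, hCle⟩ := aux_moment B hB m
  refine ⟨1 + C * 2^m, by positivity, ?_⟩
  intro H _ _ _ _ _ _ Θ _ P _ ξ hmeas hindep _hident _hint hmean hbound N hN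
  haveI : SecondCountableTopology H := UniformSpace.secondCountable_of_separable H
  set S : Θ → H := fun ω => ∑ j ∈ Finset.range N, ξ j ω with hS
  have hSmeas : Measurable S := Finset.measurable_sum _ (fun j _ => hmeas j)
  have hae : ∀ᵐ ω ∂P, ∀ j, ‖ξ j ω‖ ≤ B := ae_all_iff.mpr hbound
  have hSbd : ∀ᵐ ω ∂P, ‖S ω‖ ≤ (N:ℝ)*B := by
    filter_upwards [hae] with ω hω
    calc ‖S ω‖ ≤ ∑ j ∈ Finset.range N, ‖ξ j ω‖ := norm_sum_le _ _
      _ ≤ ∑ _j ∈ Finset.range N, B := Finset.sum_le_sum (fun j _ => hω j)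
      _ = (N:ℝ)*B := by rw [Finset.sum_const, Finset.card_range, nsmul_eq_mul]
  have hIntPow : Integrable (fun ω => ‖S ω‖^(2*m)) P := by
    refine (integrable_const (((N:ℝ)*B)^(2*m))).mono'
      (hSmeas.norm.pow_const (2*m)).aestronglyMeasurable ?_
    filter_upwards [hSbd] with ω hω
    rw [Real.norm_eq_abs, abs_pow, abs_norm]
    exact pow_le_pow_left₀ (norm_nonneg _) hω (2*m)
  set n : ℝ := (N:ℝ) with hn
  have hn1 : (1:ℝ) ≤ n := by rw [hn]; exact_mod_cast hN
  have hn0 : (0:ℝ) < n := by linarith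
  set q : ℝ := n ^ (-(1/2) : ℝ) with hq
  have hq0 : 0 < q := Real.rpow_pos_of_pos hn0 _
  have hq2 : q * q = n⁻¹ := by
    rw [hq, ← Real.rpow_add hn0]
    norm_num
    rw [Real.rpow_neg_one]
  set b : ℝ := q^(2*m) with hb
  have hb0 : 0 < b := by positivity
  -- pointwise bound
  have hpt : ∀ ω, ‖(N:ℝ)⁻¹ • S ω‖ ^ s ≤ n ^ (-(s/2)) * (1 + b * ‖S ω‖^(2*m)) := by
    intro ω
    set u : ℝ := ‖S ω‖ with hu
    have hu0 : 0 ≤ u := norm_nonneg _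
    have e1 : ‖(N:ℝ)⁻¹ • S ω‖ = q * (q * u) := by
      rw [norm_smul, Real.norm_eq_abs, abs_of_pos (by positivity : (0:ℝ) < (N:ℝ)⁻¹)]
      rw [← mul_assoc, hq2, hn]
    have e2 : (q * (q*u)) ^ s = q ^ s * (q*u) ^ s :=
      Real.mul_rpow hq0.le (by positivity)
    have e3 : q ^ s = n ^ (-(s/2)) := by
      rw [hq, ← Real.rpow_mul hn0.le]
      congr 1
      ring
    have e4 : (q*u) ^ s ≤ 1 + (q*u) ^ (((2*m : ℕ)):ℝ) :=
      aux_rpow_le (by positivity) hs.le hsm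
    have e5 : (q*u) ^ (((2*m : ℕ)):ℝ) = (q*u)^(2*m : ℕ) := Real.rpow_natCast _ _
    have e6 : (q*u)^(2*m : ℕ) = b * u^(2*m) := mul_pow q u (2*m)
    calc ‖(N:ℝ)⁻¹ • S ω‖ ^ s = q ^ s * (q*u) ^ s := by rw [e1, e2]
      _ ≤ q ^ s * (1 + b * u^(2*m)) := by
          refine mul_le_mul_of_nonneg_left ?_ (Real.rpow_nonneg hq0.le s)
          rw [← e6, ← e5]
          exact e4
      _ = n ^ (-(s/2)) * (1 + b * u^(2*m)) := by rw [e3]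
  -- integrate
  have hg : Integrable (fun ω => n ^ (-(s/2)) * (1 + b * ‖S ω‖^(2*m))) P :=
    ((integrable_const 1).add (hIntPow.const_mul b)).const_mul _
  have hmono : ∫ ω, ‖(N:ℝ)⁻¹ • S ω‖ ^ s ∂P
      ≤ ∫ ω, n ^ (-(s/2)) * (1 + b * ‖S ω‖^(2*m)) ∂P :=
    integral_mono_of_nonneg
      (Filter.Eventually.of_forall fun ω => Real.rpow_nonneg (norm_nonneg _) s)
      hg (Filter.Eventually.of_forall hpt)
  set M : ℝ := ∫ ω, ‖S ω‖^(2*m) ∂P with hM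
  have hgval : ∫ ω, n ^ (-(s/2)) * (1 + b * ‖S ω‖^(2*m)) ∂P
      = n ^ (-(s/2)) * (1 + b * M) := by
    rw [integral_const_mul, integral_add (integrable_const 1) (hIntPow.const_mul b),
      integral_const_mul]
    simp [hM]
  have hM0 : 0 ≤ M := integral_nonneg fun ω => by positivity
  have hMle : M ≤ C * (n+1)^m := by
    have := hCle H Θ P ξ hmeas hindep hmean hbound N
    rw [← hn] at this
    exact this
  have hbM : b * M ≤ C * 2^m := by
    have hbeq : b = (n^m)⁻¹ := by
      rw [hb, hq, ← Real.rpow_natCast (n ^ (-(1/2):ℝ)) (2*m), ← Real.rpow_mul hn0.le]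
      push_cast
      rw [show -(1/2) * (2*(m:ℝ)) = -(m:ℝ) by ring, Real.rpow_neg hn0.le, Real.rpow_natCast]
    have h1 : (n+1)^m ≤ 2^m * n^m := by
      calc (n+1)^m ≤ (2*n)^m := pow_le_pow_left₀ (by linarith) (by linarith) m
        _ = 2^m * n^m := mul_pow 2 n m
    have hnm : (0:ℝ) < n^m := by positivity
    have h2 : M ≤ C * (2^m * n^m) := by nlinarith
    rw [hbeq]
    calc (n^m)⁻¹ * M ≤ (n^m)⁻¹ * (C * (2^m * n^m)) :=
          mul_le_mul_of_nonneg_left h2 (by positivity)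
      _ = C * 2^m := by field_simp
  have hr0 : (0:ℝ) ≤ n ^ (-(s/2)) := Real.rpow_nonneg hn0.le _
  calc ∫ ω, ‖(N:ℝ)⁻¹ • S ω‖ ^ s ∂P ≤ n ^ (-(s/2)) * (1 + b * M) := by
        rw [← hgval]; exact hmono
    _ ≤ n ^ (-(s/2)) * (1 + C * 2^m) := by
        refine mul_le_mul_of_nonneg_left ?_ hr0
        linarith
    _ = (1 + C * 2^m) * n ^ (-(s/2)) := mul_comm _ _
end

section
/- For every s ≥ 1 there exists a constant c, depending only on s, M, ε, δ and c⁽²⁾ (and not on N or t), such that for every N ≥ 1 and every t ∈ (ε, 1−ε), E[ | V_{(ℓ)} − E[V_{(ℓ)}] |^{2s} ] ≤ c N^{−s}. -/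
open MeasureTheory ProbabilityTheory

noncomputable section

/-- The `ℓ`-th smallest value among `v 0, …, v (N−1)` (for `1 ≤ ℓ ≤ N`), defined as the
empirical quantile `inf {x : #{j : v j ≤ x} ≥ ℓ}`. -/
def orderStat {N : ℕ} (v : Fin N → ℝ) (ℓ : ℕ) : ℝ :=
  sInf {x : ℝ | ℓ ≤ (Finset.univ.filter fun j => v j ≤ x).card}


lemma orderStat_key {N : ℕ} (v : Fin N → ℝ) {ℓ : ℕ} (h1 : 1 ≤ ℓ) (hN : ℓ ≤ N) :
    ∃ j : Fin N, orderStat v ℓ = v j ∧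
      ∀ x : ℝ, orderStat v ℓ ≤ x ↔ ℓ ≤ (Finset.univ.filter fun j => v j ≤ x).card := by
  classical
  have hN0 : 0 < N := lt_of_lt_of_le h1 hN
  have : Nonempty (Fin N) := ⟨⟨0, hN0⟩⟩
  set S : Set ℝ := {x : ℝ | ℓ ≤ (Finset.univ.filter fun j => v j ≤ x).card} with hS
  have hmono : ∀ {x y : ℝ}, x ≤ y → x ∈ S → y ∈ S := by
    intro x y hxy hx
    refine le_trans hx (Finset.card_le_card ?_)
    intro j hj
    simp only [Finset.mem_filter, Finset.mem_univ, true_and] at hj ⊢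
    exact hj.trans hxy
  set R : Finset ℝ := Finset.univ.image v with hR
  have hRne : R.Nonempty := ⟨v ⟨0, hN0⟩, Finset.mem_image_of_mem v (Finset.mem_univ _)⟩
  set F : Finset ℝ := R.filter (fun y => ℓ ≤ (Finset.univ.filter fun j => v j ≤ y).card) with hF
  have hFne : F.Nonempty := by
    refine ⟨R.max' hRne, Finset.mem_filter.2 ⟨Finset.max'_mem _ _, ?_⟩⟩
    have : (Finset.univ.filter fun j => v j ≤ R.max' hRne) = Finset.univ := by
      refine Finset.filter_true_of_mem (fun j _ => ?_)
      exact Finset.le_max' _ _ (Finset.mem_image_of_mem v (Finset.mem_univ _))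
    rw [this]
    simpa using hN
  set m : ℝ := F.min' hFne with hm
  have hmF : m ∈ F := Finset.min'_mem _ _
  have hmS : m ∈ S := (Finset.mem_filter.1 hmF).2
  have hle : ∀ x ∈ S, m ≤ x := by
    intro x hx
    have hcard : ℓ ≤ (Finset.univ.filter fun j => v j ≤ x).card := hx
    have hne : (Finset.univ.filter fun j => v j ≤ x).Nonempty := by
      rw [← Finset.card_pos]; omega
    obtain ⟨j0, hj0⟩ := hne
    have hj0le : v j0 ≤ x := (Finset.mem_filter.1 hj0).2
    set A : Finset ℝ := R.filter (· ≤ x) with hA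
    have hAne : A.Nonempty := ⟨v j0, Finset.mem_filter.2
      ⟨Finset.mem_image_of_mem v (Finset.mem_univ _), hj0le⟩⟩
    set y : ℝ := A.max' hAne with hy
    have hyx : y ≤ x := (Finset.mem_filter.1 (Finset.max'_mem _ hAne)).2
    have hyF : y ∈ F := by
      refine Finset.mem_filter.2 ⟨(Finset.mem_filter.1 (Finset.max'_mem _ hAne)).1, ?_⟩
      refine le_trans hcard (Finset.card_le_card ?_)
      intro j hj
      simp only [Finset.mem_filter, Finset.mem_univ, true_and] at hj ⊢
      refine Finset.le_max' A (v j) ?_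
      rw [hA, Finset.mem_filter]
      exact ⟨Finset.mem_image_of_mem v (Finset.mem_univ _), hj⟩
    exact le_trans (Finset.min'_le _ _ hyF) hyx
  have hSIci : S = Set.Ici m := by
    ext x
    constructor
    · intro hx; exact hle x hx
    · intro hx; exact hmono hx hmS
  have hOS : orderStat v ℓ = m := by
    rw [orderStat, ← hS, hSIci, csInf_Ici]
  obtain ⟨j, _, hj⟩ := Finset.mem_image.1 (Finset.mem_filter.1 hmF).1
  refine ⟨j, by rw [hOS, hj], fun x => ?_⟩
  rw [hOS]
  constructor
  · intro h; exact hmono h hmS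
  · intro h; exact hle x h


lemma exp_le_quad {θ : ℝ} (h0 : 0 ≤ θ) (h1 : θ ≤ 1) : Real.exp θ - 1 ≤ θ + θ^2 := by
  have h := Real.exp_bound (x := θ) (by rw [abs_of_nonneg h0]; exact h1) (n := 2) (by norm_num)
  rw [abs_of_nonneg h0] at h
  have h2 : |Real.exp θ - (1 + θ)| ≤ θ^2 * (3/4) := by
    convert h using 2
    · simp [Finset.sum_range_succ]
    · norm_num
  have := abs_le.1 h2
  nlinarith [sq_nonneg θ]

lemma exp_neg_le_quad {θ : ℝ} (h0 : 0 ≤ θ) : Real.exp (-θ) - 1 ≤ -θ + θ^2 := by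
  have h1 : θ + 1 ≤ Real.exp θ := Real.add_one_le_exp θ
  have h2 : Real.exp (-θ) * Real.exp θ = 1 := by
    rw [← Real.exp_add]; simp
  have h3 : 0 < Real.exp (-θ) := Real.exp_pos _
  nlinarith [sq_nonneg θ, mul_nonneg (mul_nonneg h3.le h0) (mul_nonneg h0 h0)]

/-- Chernoff bounds for the empirical count `S ω = #{j : V j ω ≤ y}`. -/
lemma binom_tail {Θ : Type*} [MeasurableSpace Θ] (P : Measure Θ) [IsProbabilityMeasure P]
    {N : ℕ} (V : Fin N → Θ → ℝ) (hVm : ∀ j, Measurable (V j))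
    (hind : iIndepFun V P) (y : ℝ) (p : ℝ)
    (hp : ∀ j, (P {ω | V j ω ≤ y}).toReal = p) (hp0 : 0 ≤ p) (hp1 : p ≤ 1)
    (h : ℝ) (hh0 : 0 ≤ h) (hh2 : h ≤ 2) (m : ℝ) :
    ((N:ℝ) * p + (N:ℝ) * h ≤ m →
      (P {ω | m ≤ ((Finset.univ.filter fun j => V j ω ≤ y).card : ℝ)}).toReal ≤
        Real.exp (-(N:ℝ) * h^2 / 4)) ∧
    (m ≤ (N:ℝ) * p - (N:ℝ) * h →
      (P {ω | ((Finset.univ.filter fun j => V j ω ≤ y).card : ℝ) ≤ m}).toReal ≤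
        Real.exp (-(N:ℝ) * h^2 / 4)) := by
  classical
  set B : Fin N → Θ → ℝ := fun j ω => if V j ω ≤ y then 1 else 0 with hB
  have hBm : ∀ j, Measurable (B j) := fun j =>
    Measurable.ite (measurableSet_le (hVm j) measurable_const) measurable_const measurable_const
  have hBind : iIndepFun B P := by
    have : Measurable (fun z : ℝ => if z ≤ y then (1:ℝ) else 0) :=
      Measurable.ite measurableSet_Iic measurable_const measurable_const
    exact hind.comp (fun _ => fun z : ℝ => if z ≤ y then (1:ℝ) else 0) (fun _ => this)
  have hSfun : (∑ j, B j) = fun ω => ∑ j, B j ω := by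
    ext ω; simp
  have hSm : Measurable (∑ j, B j) := by
    rw [hSfun]; exact Finset.measurable_sum _ (fun j _ => hBm j)
  have hScard : ∀ ω, (∑ j, B j) ω = ((Finset.univ.filter fun j => V j ω ≤ y).card : ℝ) := by
    intro ω
    rw [hSfun, Finset.card_filter]
    push_cast
    refine Finset.sum_congr rfl (fun j _ => ?_)
    by_cases hc : V j ω ≤ y <;> simp [hB, hc]
  have hSbound : ∀ ω, 0 ≤ (∑ j, B j) ω ∧ (∑ j, B j) ω ≤ N := by
    intro ω
    rw [hScard]
    refine ⟨by positivity, ?_⟩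
    have : (Finset.univ.filter fun j => V j ω ≤ y).card ≤ N := by
      refine le_trans (Finset.card_le_card (Finset.filter_subset _ _)) ?_
      simp
    exact_mod_cast this
  have hint : ∀ t : ℝ, Integrable (fun ω => Real.exp (t * (∑ j, B j) ω)) P := by
    intro t
    refine Integrable.mono' (integrable_const (Real.exp (|t| * N))) ?_ ?_
    · exact ((hSm.const_mul t).exp).aestronglyMeasurable
    · refine Filter.Eventually.of_forall (fun ω => ?_)
      rw [Real.norm_eq_abs, abs_of_pos (Real.exp_pos _)]
      apply Real.exp_le_exp.2
      obtain ⟨h0, h1⟩ := hSbound ω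
      calc t * (∑ j, B j) ω ≤ |t| * (∑ j, B j) ω := mul_le_mul_of_nonneg_right (le_abs_self t) h0
        _ ≤ |t| * N := mul_le_mul_of_nonneg_left h1 (abs_nonneg t)
  have hBint : ∀ j, Integrable (B j) P := by
    intro j
    refine Integrable.mono' (integrable_const 1) (hBm j).aestronglyMeasurable ?_
    refine Filter.Eventually.of_forall (fun ω => ?_)
    rw [Real.norm_eq_abs]
    by_cases hc : V j ω ≤ y <;> simp [hB, hc]
  have hEB : ∀ j, ∫ ω, B j ω ∂P = p := by
    intro j
    have heq : B j = Set.indicator {ω | V j ω ≤ y} (fun _ => (1:ℝ)) := by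
      ext ω
      by_cases hc : V j ω ≤ y <;> simp [hB, Set.indicator, hc]
    rw [heq, integral_indicator_const _ (measurableSet_le (hVm j) measurable_const)]
    rw [smul_eq_mul, mul_comm, ← hp j, measureReal_def]
    ring
  have hmgfB : ∀ j (t : ℝ), mgf (B j) P t = 1 + p * (Real.exp t - 1) := by
    intro j t
    have hfun : (fun ω => Real.exp (t * B j ω)) =
        fun ω => 1 + (Real.exp t - 1) * B j ω := by
      ext ω
      by_cases hc : V j ω ≤ y <;> simp [hB, hc]
    rw [mgf, hfun, integral_add (integrable_const 1) ((hBint j).const_mul _),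
      integral_const_mul, hEB j]
    simp
    ring
  have hmgfS : ∀ t : ℝ, mgf (∑ j, B j) P t = (1 + p * (Real.exp t - 1))^N := by
    intro t
    rw [hBind.mgf_sum hBm]
    simp [hmgfB]
  have key : ∀ t : ℝ, Real.exp t - 1 ≤ t + t^2 → 0 ≤ 1 + p * (Real.exp t - 1) →
      mgf (∑ j, B j) P t ≤ Real.exp ((N:ℝ) * (p * (t + t^2))) := by
    intro t ht hpos
    rw [hmgfS]
    have h1 : 1 + p * (Real.exp t - 1) ≤ Real.exp (p * (Real.exp t - 1)) := by
      linarith [Real.add_one_le_exp (p * (Real.exp t - 1))]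
    have h2 : (1 + p * (Real.exp t - 1))^N ≤ (Real.exp (p * (Real.exp t - 1)))^N :=
      pow_le_pow_left₀ hpos h1 N
    refine h2.trans ?_
    rw [← Real.exp_nat_mul]
    apply Real.exp_le_exp.2
    have hle : p * (Real.exp t - 1) ≤ p * (t + t^2) := mul_le_mul_of_nonneg_left ht hp0
    exact mul_le_mul_of_nonneg_left hle (Nat.cast_nonneg N)
  constructor
  · -- upper tail
    intro hm
    set θ : ℝ := h/2 with hθ
    have hθ0 : 0 ≤ θ := by positivity
    have hθ1 : θ ≤ 1 := by rw [hθ]; linarith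
    have hev : {ω | m ≤ ((Finset.univ.filter fun j => V j ω ≤ y).card : ℝ)} =
        {ω | m ≤ (∑ j, B j) ω} := by
      ext ω; rw [Set.mem_setOf_eq, Set.mem_setOf_eq, hScard]
    rw [hev]
    have hcher := measure_ge_le_exp_mul_mgf (X := ∑ j, B j) (μ := P) (t := θ) m hθ0 (hint θ)
    refine hcher.trans ?_
    have hpos : 0 ≤ 1 + p * (Real.exp θ - 1) := by
      have : 0 ≤ Real.exp θ - 1 := by
        have := Real.add_one_le_exp θ; linarith
      positivity
    have hb := key θ (exp_le_quad hθ0 hθ1) hpos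
    calc Real.exp (-θ * m) * mgf (∑ j, B j) P θ
        ≤ Real.exp (-θ * m) * Real.exp ((N:ℝ) * (p * (θ + θ^2))) :=
          mul_le_mul_of_nonneg_left hb (Real.exp_pos _).le
      _ = Real.exp (-θ * m + (N:ℝ) * (p * (θ + θ^2))) := by rw [← Real.exp_add]
      _ ≤ Real.exp (-(N:ℝ) * h^2 / 4) := by
          apply Real.exp_le_exp.2
          rw [hθ]
          nlinarith [mul_le_mul_of_nonneg_right hm (by positivity : (0:ℝ) ≤ h/2),
            mul_le_mul_of_nonneg_right hp1
              (mul_nonneg (Nat.cast_nonneg (α := ℝ) N) (sq_nonneg h))]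
  · -- lower tail
    intro hm
    set θ : ℝ := h/2 with hθ
    have hθ0 : 0 ≤ θ := by positivity
    have hev : {ω | ((Finset.univ.filter fun j => V j ω ≤ y).card : ℝ) ≤ m} =
        {ω | (∑ j, B j) ω ≤ m} := by
      ext ω; rw [Set.mem_setOf_eq, Set.mem_setOf_eq, hScard]
    rw [hev]
    have hcher := measure_le_le_exp_mul_mgf (X := ∑ j, B j) (μ := P) (t := -θ) m
      (by linarith) (hint (-θ))
    refine hcher.trans ?_
    have hexp1 : Real.exp (-θ) - 1 ≤ 0 := by
      have : Real.exp (-θ) ≤ Real.exp 0 := Real.exp_le_exp.2 (by linarith)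
      simpa using this
    have hpos : 0 ≤ 1 + p * (Real.exp (-θ) - 1) := by
      have h2 : 1 * (Real.exp (-θ) - 1) ≤ p * (Real.exp (-θ) - 1) :=
        mul_le_mul_of_nonpos_right hp1 hexp1
      have := Real.exp_pos (-θ)
      nlinarith
    have hquad : Real.exp (-θ) - 1 ≤ (-θ) + (-θ)^2 := by
      have := exp_neg_le_quad hθ0
      simpa using this
    have hb := key (-θ) hquad hpos
    calc Real.exp (-(-θ) * m) * mgf (∑ j, B j) P (-θ)
        ≤ Real.exp (-(-θ) * m) * Real.exp ((N:ℝ) * (p * (-θ + (-θ)^2))) :=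
          mul_le_mul_of_nonneg_left hb (Real.exp_pos _).le
      _ = Real.exp (θ * m + (N:ℝ) * (p * (-θ + θ^2))) := by rw [← Real.exp_add]; ring_nf
      _ ≤ Real.exp (-(N:ℝ) * h^2 / 4) := by
          apply Real.exp_le_exp.2
          rw [hθ]
          nlinarith [mul_le_mul_of_nonneg_right hm (by positivity : (0:ℝ) ≤ h/2),
            mul_le_mul_of_nonneg_right hp1
              (mul_nonneg (Nat.cast_nonneg (α := ℝ) N) (sq_nonneg h))]


/-- From a Gaussian-type tail bound, a moment bound of order `q`. -/
lemma moment_from_tail {Θ : Type*} [MeasurableSpace Θ] (P : Measure Θ) [IsProbabilityMeasure P]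
    (Y : Θ → ℝ) (hYm : Measurable Y) {N : ℕ} (hN : 0 < N) (B C α q : ℝ)
    (hB : 0 < B) (hC : 1 ≤ C) (hα : 0 < α) (hq : 1 ≤ q)
    (hbd : ∀ᵐ ω ∂P, |Y ω| ≤ B)
    (htail : ∀ x : ℝ, 0 < x → (P {ω | x < |Y ω|}).toReal ≤ C * Real.exp (-(α * N * x^2))) :
    ∫ ω, |Y ω| ^ q ∂P ≤
      (1 + C * Real.exp (q^2/(2*α)) * (1 - Real.exp (-(α/2)))⁻¹) * (N:ℝ) ^ (-(q/2)) := by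
  classical
  have hq0 : 0 ≤ q := le_trans zero_le_one hq
  have hNR : 0 < (N:ℝ) := by exact_mod_cast hN
  set σ : ℝ := Real.sqrt N with hσ
  have hσ0 : 0 < σ := Real.sqrt_pos.2 hNR
  have hσsq : σ^2 = (N:ℝ) := Real.sq_sqrt hNR.le
  set K : ℕ := ⌈B * σ⌉₊ with hK
  have hK1 : 1 ≤ K := Nat.one_le_ceil_iff.2 (by positivity)
  set A : ℕ → Set Θ := fun i =>
    if i = 0 then {ω | |Y ω| ≤ 1/σ}
    else {ω | (i:ℝ)/σ < |Y ω| ∧ |Y ω| ≤ ((i:ℝ)+1)/σ} with hA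
  have hAm : ∀ i, MeasurableSet (A i) := by
    intro i
    by_cases hi : i = 0
    · simp only [hA, hi, if_pos]
      exact measurableSet_le hYm.abs measurable_const
    · simp only [hA, if_neg hi]
      exact (measurableSet_lt measurable_const hYm.abs).inter
        (measurableSet_le hYm.abs measurable_const)
  -- pointwise bound
  have hpt : ∀ ω, |Y ω| ≤ B →
      |Y ω| ^ q ≤ ∑ i ∈ Finset.range K, (A i).indicator
        (fun _ => (((i:ℝ)+1)/σ) ^ q) ω := by
    intro ω hω
    have hnn : ∀ i ∈ Finset.range K,
        0 ≤ (A i).indicator (fun _ => (((i:ℝ)+1)/σ) ^ q) ω := by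
      intro i _
      apply Set.indicator_nonneg
      intro _ _
      positivity
    by_cases h0 : |Y ω| ≤ 1/σ
    · have hmem : ω ∈ A 0 := by rw [hA]; simpa using h0
      refine le_trans ?_ (Finset.single_le_sum hnn (Finset.mem_range.2 hK1))
      rw [Set.indicator_of_mem hmem]
      refine le_of_le_of_eq (Real.rpow_le_rpow (abs_nonneg _) h0 hq0) ?_
      norm_num
    · push_neg at h0
      set z : ℝ := |Y ω| * σ with hz
      have hz1 : 1 < z := by
        rw [hz]
        calc (1:ℝ) = (1/σ) * σ := by field_simp
          _ < |Y ω| * σ := mul_lt_mul_of_pos_right h0 hσ0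
      have hz0 : 0 ≤ z := by positivity
      have h2 : 2 ≤ ⌈z⌉₊ := by
        have : 1 < ⌈z⌉₊ := Nat.lt_ceil.2 (by exact_mod_cast hz1)
        omega
      set i : ℕ := ⌈z⌉₊ - 1 with hi
      have hiz : ((⌈z⌉₊ : ℕ) : ℝ) = (i:ℝ) + 1 := by
        rw [hi]
        push_cast [Nat.cast_sub (by omega : 1 ≤ ⌈z⌉₊)]
        ring
      have hi1 : 1 ≤ i := by omega
      have hilt : (i:ℝ) < z := by
        have h3 := Nat.ceil_lt_add_one hz0
        rw [hiz] at h3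
        linarith
      have hzle : z ≤ (i:ℝ) + 1 := by
        have := Nat.le_ceil z
        rw [hiz] at this
        exact this
      have hiK : i ∈ Finset.range K := by
        refine Finset.mem_range.2 ?_
        have hzK : z ≤ B * σ := mul_le_mul_of_nonneg_right hω hσ0.le
        have : (i:ℝ) < (K:ℝ) := lt_of_lt_of_le hilt (hzK.trans (Nat.le_ceil _))
        exact_mod_cast this
      have hYlt : (i:ℝ)/σ < |Y ω| := by
        rw [div_lt_iff₀ hσ0]
        exact hilt
      have hYle : |Y ω| ≤ ((i:ℝ)+1)/σ := by
        rw [le_div_iff₀ hσ0]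
        exact hzle
      have hmem : ω ∈ A i := by
        rw [hA]
        simp only [if_neg (by omega : ¬ i = 0)]
        exact ⟨hYlt, hYle⟩
      refine le_trans ?_ (Finset.single_le_sum hnn hiK)
      rw [Set.indicator_of_mem hmem]
      exact Real.rpow_le_rpow (abs_nonneg _) hYle hq0
  -- integrability
  have hmeas : Measurable (fun ω => |Y ω| ^ q) :=
    (Real.continuous_rpow_const hq0).measurable.comp hYm.abs
  have hint1 : Integrable (fun ω => |Y ω| ^ q) P := by
    refine Integrable.mono' (integrable_const (B ^ q)) hmeas.aestronglyMeasurable ?_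
    filter_upwards [hbd] with ω hω
    rw [Real.norm_eq_abs, abs_of_nonneg (Real.rpow_nonneg (abs_nonneg _) q)]
    exact Real.rpow_le_rpow (abs_nonneg _) hω hq0
  have hint2 : ∀ i, Integrable ((A i).indicator
      (fun _ => (((i:ℝ)+1)/σ) ^ q)) P :=
    fun i => (integrable_const _).indicator (hAm i)
  -- integrate the pointwise bound
  have hstep1 : ∫ ω, |Y ω| ^ q ∂P ≤
      ∑ i ∈ Finset.range K, ((((i:ℝ)+1)/σ) ^ q) * (P (A i)).toReal := by
    have h1 : ∫ ω, |Y ω| ^ q ∂P ≤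
        ∫ ω, (∑ i ∈ Finset.range K, (A i).indicator
          (fun _ => (((i:ℝ)+1)/σ) ^ q) ω) ∂P := by
      refine integral_mono_ae hint1 (integrable_finset_sum _ (fun i _ => hint2 i)) ?_
      filter_upwards [hbd] with ω hω
      exact hpt ω hω
    refine h1.trans_eq ?_
    rw [integral_finset_sum _ (fun i _ => hint2 i)]
    refine Finset.sum_congr rfl (fun i _ => ?_)
    rw [integral_indicator_const _ (hAm i), smul_eq_mul, mul_comm, measureReal_def]
  -- tail bound per shell, i ≥ 1
  have htails : ∀ i : ℕ, 1 ≤ i → (P (A i)).toReal ≤ C * Real.exp (-(α * i^2)) := by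
    intro i hi1
    have hsub : A i ⊆ {ω | (i:ℝ)/σ < |Y ω|} := by
      rw [hA]
      simp only [if_neg (by omega : ¬ i = 0)]
      intro ω hω
      exact hω.1
    have hx0 : 0 < (i:ℝ)/σ := by
      apply div_pos _ hσ0
      exact_mod_cast hi1
    have h2 := htail ((i:ℝ)/σ) hx0
    have hmono : (P (A i)).toReal ≤ (P {ω | (i:ℝ)/σ < |Y ω|}).toReal :=
      ENNReal.toReal_mono (measure_ne_top _ _) (measure_mono hsub)
    refine hmono.trans (h2.trans_eq ?_)
    congr 1
    rw [div_pow, hσsq]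
    field_simp
  -- per-term estimate
  set r : ℝ := Real.exp (-(α/2)) with hr
  have hr0 : 0 < r := Real.exp_pos _
  have hr1 : r < 1 := Real.exp_lt_one_iff.2 (by linarith)
  have hterm : ∀ i : ℕ, 1 ≤ i →
      (((i:ℝ)+1)) ^ q * Real.exp (-(α * i^2)) ≤ Real.exp (q^2/(2*α)) * r ^ i := by
    intro i hi1
    have hiR : (1:ℝ) ≤ (i:ℝ) := by exact_mod_cast hi1
    have hstep : ((i:ℝ)+1) ^ q ≤ Real.exp (q * i) := by
      rw [Real.rpow_def_of_pos (by linarith)]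
      apply Real.exp_le_exp.2
      rw [mul_comm]
      apply mul_le_mul_of_nonneg_left _ hq0
      have := Real.log_le_sub_one_of_pos (show (0:ℝ) < (i:ℝ)+1 by linarith)
      linarith
    have harith : q * i - α * i^2 ≤ q^2/(2*α) - (α/2) * i := by
      have hAMGM : q * (i:ℝ) ≤ (α/2) * (i:ℝ)^2 + q^2/(2*α) := by
        have hne : α ≠ 0 := ne_of_gt hα
        have e : α * ((α/2) * (i:ℝ)^2 + q^2/(2*α)) = (α^2/2)*(i:ℝ)^2 + q^2/2 := by
          field_simp
        have key2 : α * (q * (i:ℝ)) ≤ α * ((α/2) * (i:ℝ)^2 + q^2/(2*α)) := by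
          rw [e]
          nlinarith [sq_nonneg (α * (i:ℝ) - q)]
        exact le_of_mul_le_mul_left key2 hα
      nlinarith [mul_le_mul_of_nonneg_left (by nlinarith : (i:ℝ) ≤ (i:ℝ)^2) (by positivity : (0:ℝ) ≤ α/2)]
    calc ((i:ℝ)+1) ^ q * Real.exp (-(α * i^2))
        ≤ Real.exp (q * i) * Real.exp (-(α * i^2)) :=
          mul_le_mul_of_nonneg_right hstep (Real.exp_pos _).le
      _ = Real.exp (q * i - α * i^2) := by rw [← Real.exp_add]; ring_nf
      _ ≤ Real.exp (q^2/(2*α) - (α/2) * i) := Real.exp_le_exp.2 harith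
      _ = Real.exp (q^2/(2*α)) * r ^ i := by
          rw [hr, ← Real.exp_nat_mul, ← Real.exp_add]
          congr 1
          ring
  -- sum estimate
  have hσq : σ ^ q = (N:ℝ) ^ (q/2) := by
    rw [hσ, Real.sqrt_eq_rpow, ← Real.rpow_mul hNR.le]
    congr 1
    ring
  have hNinv : (N:ℝ) ^ (-(q/2)) = (σ ^ q)⁻¹ := by
    rw [hσq, Real.rpow_neg hNR.le]
  have hgeom : ∑ i ∈ Finset.Ico 1 K, r ^ i ≤ (1 - r)⁻¹ := by
    have hsubset : Finset.Ico 1 K ⊆ Finset.range K := by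
      intro x hx
      rw [Finset.mem_range]
      exact (Finset.mem_Ico.1 hx).2
    refine le_trans (Finset.sum_le_sum_of_subset_of_nonneg hsubset
      (fun i _ _ => (pow_nonneg hr0.le i))) ?_
    calc ∑ i ∈ Finset.range K, r ^ i ≤ ∑' i : ℕ, r ^ i :=
          Summable.sum_le_tsum _ (fun i _ => pow_nonneg hr0.le i)
            (summable_geometric_of_lt_one hr0.le hr1)
      _ = (1 - r)⁻¹ := tsum_geometric_of_lt_one hr0.le hr1
  -- assemble
  have hsplit : ∑ i ∈ Finset.range K, ((((i:ℝ)+1)/σ) ^ q) * (P (A i)).toReal =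
      (((0:ℝ)+1)/σ) ^ q * (P (A 0)).toReal +
      ∑ i ∈ Finset.Ico 1 K, ((((i:ℝ)+1)/σ) ^ q) * (P (A i)).toReal := by
    rw [Finset.range_eq_Ico, Finset.sum_eq_sum_Ico_succ_bot (by omega : 0 < K)]
    norm_num
  have hP0 : (P (A 0)).toReal ≤ 1 := by
    rw [← ENNReal.toReal_one]
    exact ENNReal.toReal_mono (by norm_num) prob_le_one
  have hterm0 : (((0:ℝ)+1)/σ) ^ q * (P (A 0)).toReal ≤ (N:ℝ) ^ (-(q/2)) := by
    rw [hNinv]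
    calc (((0:ℝ)+1)/σ) ^ q * (P (A 0)).toReal ≤ (((0:ℝ)+1)/σ) ^ q * 1 := by
          apply mul_le_mul_of_nonneg_left hP0 (by positivity)
      _ = (σ ^ q)⁻¹ := by
          rw [mul_one, show (((0:ℝ)+1)/σ) = σ⁻¹ by rw [zero_add, one_div],
            Real.inv_rpow hσ0.le]
  have hrest : ∑ i ∈ Finset.Ico 1 K, ((((i:ℝ)+1)/σ) ^ q) * (P (A i)).toReal ≤
      C * Real.exp (q^2/(2*α)) * (1 - r)⁻¹ * (N:ℝ) ^ (-(q/2)) := by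
    have hstep2 : ∀ i ∈ Finset.Ico 1 K,
        ((((i:ℝ)+1)/σ) ^ q) * (P (A i)).toReal ≤
        (C * Real.exp (q^2/(2*α)) * (σ^q)⁻¹) * r ^ i := by
      intro i hi
      have hi1 : 1 ≤ i := (Finset.mem_Ico.1 hi).1
      have hdiv : (((i:ℝ)+1)/σ) ^ q = ((i:ℝ)+1) ^ q * (σ^q)⁻¹ := by
        rw [Real.div_rpow (by positivity) hσ0.le, div_eq_mul_inv]
      rw [hdiv]
      calc ((i:ℝ)+1) ^ q * (σ^q)⁻¹ * (P (A i)).toReal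
          ≤ ((i:ℝ)+1) ^ q * (σ^q)⁻¹ * (C * Real.exp (-(α * i^2))) := by
            apply mul_le_mul_of_nonneg_left (htails i hi1) (by positivity)
        _ = (((i:ℝ)+1) ^ q * Real.exp (-(α * i^2))) * C * (σ^q)⁻¹ := by ring
        _ ≤ (Real.exp (q^2/(2*α)) * r ^ i) * C * (σ^q)⁻¹ := by
            apply mul_le_mul_of_nonneg_right
              (mul_le_mul_of_nonneg_right (hterm i hi1) (by linarith)) (by positivity)
        _ = (C * Real.exp (q^2/(2*α)) * (σ^q)⁻¹) * r ^ i := by ring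
    calc ∑ i ∈ Finset.Ico 1 K, ((((i:ℝ)+1)/σ) ^ q) * (P (A i)).toReal
        ≤ ∑ i ∈ Finset.Ico 1 K, (C * Real.exp (q^2/(2*α)) * (σ^q)⁻¹) * r ^ i :=
          Finset.sum_le_sum hstep2
      _ = (C * Real.exp (q^2/(2*α)) * (σ^q)⁻¹) * ∑ i ∈ Finset.Ico 1 K, r ^ i := by
          rw [Finset.mul_sum]
      _ ≤ (C * Real.exp (q^2/(2*α)) * (σ^q)⁻¹) * (1 - r)⁻¹ := by
          apply mul_le_mul_of_nonneg_left hgeom (by positivity)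
      _ = C * Real.exp (q^2/(2*α)) * (1 - r)⁻¹ * (N:ℝ) ^ (-(q/2)) := by
          rw [hNinv]; ring
  calc ∫ ω, |Y ω| ^ q ∂P
      ≤ ∑ i ∈ Finset.range K, ((((i:ℝ)+1)/σ) ^ q) * (P (A i)).toReal := hstep1
    _ = (((0:ℝ)+1)/σ) ^ q * (P (A 0)).toReal +
        ∑ i ∈ Finset.Ico 1 K, ((((i:ℝ)+1)/σ) ^ q) * (P (A i)).toReal := hsplit
    _ ≤ (N:ℝ) ^ (-(q/2)) + C * Real.exp (q^2/(2*α)) * (1 - r)⁻¹ * (N:ℝ) ^ (-(q/2)) :=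
        add_le_add hterm0 hrest
    _ = (1 + C * Real.exp (q^2/(2*α)) * (1 - Real.exp (-(α/2)))⁻¹) * (N:ℝ) ^ (-(q/2)) := by
        rw [hr]; ring

lemma measurable_card_le {N : ℕ} {Θ : Type*} [MeasurableSpace Θ] (V : Fin N → Θ → ℝ)
    (hV : ∀ j, Measurable (V j)) (x : ℝ) :
    Measurable (fun ω => (Finset.univ.filter fun j => V j ω ≤ x).card) := by
  classical
  have h : (fun ω => (Finset.univ.filter fun j => V j ω ≤ x).card)
      = fun ω => ∑ j, if V j ω ≤ x then 1 else 0 := by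
    funext ω
    exact Finset.card_filter _ _
  rw [h]
  exact Finset.measurable_sum _ (fun j _ =>
    Measurable.ite (measurableSet_le (hV j) measurable_const) measurable_const measurable_const)

lemma measurable_orderStat {N ℓ : ℕ} (h1 : 1 ≤ ℓ) (hN : ℓ ≤ N) {Θ : Type*} [MeasurableSpace Θ]
    (V : Fin N → Θ → ℝ) (hV : ∀ j, Measurable (V j)) :
    Measurable (fun ω => orderStat (fun j => V j ω) ℓ) := by
  apply measurable_of_Iic
  intro x
  have he : (fun ω => orderStat (fun j => V j ω) ℓ) ⁻¹' (Set.Iic x)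
      = {ω | ℓ ≤ (Finset.univ.filter fun j => V j ω ≤ x).card} := by
    ext ω
    obtain ⟨j, hj, hiff⟩ := orderStat_key (fun j => V j ω) h1 hN
    simpa using hiff x
  rw [he]
  exact measurableSet_le measurable_const (measurable_card_le V hV x)

set_option maxHeartbeats 1000000 in
/-- **Lemma (central moments of the empirical quantile).**
In the setting of the bias lemma, for every `s ≥ 1` there is a constant `c`, depending
only on `s, M, ε, δ, c⁽²⁾` (not on `N` or `t`), such that for every `N ≥ 1` and
`t ∈ (ε, 1−ε)`, with `ℓ = ⌈Nt⌉`, `E|V_{(ℓ)} − E[V_{(ℓ)}]|^{2s} ≤ c N^{−s}`. -/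
theorem statement10 (s M ε δ c2 : ℝ) (hs : 1 ≤ s) (hM : 0 < M) (hδ : 0 ≤ δ)
    (hδε : δ < ε) (hε : ε < 1 / 2) :
    ∃ c : ℝ, 0 < c ∧
      ∀ (N : ℕ) (hN : 0 < N), ∀ t ∈ Set.Ioo ε (1 - ε),
      ∀ (Θ : Type*) [MeasurableSpace Θ] (P : Measure Θ) [IsProbabilityMeasure P]
        (V : Fin N → Θ → ℝ),
        (∀ j, Measurable (V j)) →
        iIndepFun V P →
        (∀ j j', Measure.map (V j) P = Measure.map (V j') P) →
        (∀ j, ∀ᵐ ω ∂P, |V j ω| ≤ M) →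
        ∀ (G Ginv : ℝ → ℝ) (a b : ℝ), a < b →
          (∀ x, G x = (P {ω | V ⟨0, hN⟩ ω ≤ x}).toReal) →
          Set.BijOn G (Set.Ioo a b) (Set.Ioo 0 1) →
          (∀ x ∈ Set.Ioo a b, Ginv (G x) = x) →
          (∀ u ∈ Set.Ioo (0 : ℝ) 1, Ginv u ∈ Set.Ioo a b ∧ G (Ginv u) = u) →
          (∀ u ∈ Set.Ioo δ (1 - δ),
            DifferentiableAt ℝ Ginv u ∧ DifferentiableAt ℝ (deriv Ginv) u ∧
            |deriv Ginv u| ≤ c2 ∧ |deriv (deriv Ginv) u| ≤ c2) →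
          ∫ ω, |orderStat (fun j => V j ω) ⌈(N : ℝ) * t⌉₊ -
              ∫ ω', orderStat (fun j => V j ω') ⌈(N : ℝ) * t⌉₊ ∂P|
            ^ (2 * s) ∂P ≤ c * (N : ℝ) ^ (-s) := by
  classical
  have hε0 : 0 < ε := lt_of_le_of_lt hδ hδε
  set c2' : ℝ := max c2 1 with hc2'
  have hc2'0 : 0 < c2' := lt_of_lt_of_le one_pos (le_max_right _ _)
  set α₁ : ℝ := min (1/(4*c2'^2)) ((ε-δ)^2/(144*M^2)) with hα₁
  have hεδ : 0 < ε - δ := by linarith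
  have hα₁0 : 0 < α₁ := lt_min (by positivity) (by positivity)
  have hrpos : 0 < 1 - Real.exp (-(α₁/2)) := by
    have : Real.exp (-(α₁/2)) < 1 := Real.exp_lt_one_iff.2 (by linarith)
    linarith
  set c₁ : ℝ := 1 + 2 * Real.exp (1^2/(2*α₁)) * (1 - Real.exp (-(α₁/2)))⁻¹ with hc₁
  have hc₁1 : 1 ≤ c₁ := by
    have h1 : 0 ≤ 2 * Real.exp (1^2/(2*α₁)) * (1 - Real.exp (-(α₁/2)))⁻¹ :=
      mul_nonneg (by positivity) (inv_nonneg.2 hrpos.le)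
    rw [hc₁]
    linarith
  have hc₁0 : 0 < c₁ := lt_of_lt_of_le one_pos hc₁1
  set α₂ : ℝ := α₁/4 with hα₂
  have hα₂0 : 0 < α₂ := by positivity
  set C₂ : ℝ := 2 * Real.exp (4*α₂*c₁^2) with hC₂
  have hC₂1 : 1 ≤ C₂ := by
    have : 1 ≤ Real.exp (4*α₂*c₁^2) := Real.one_le_exp (by positivity)
    linarith
  have hr2pos : 0 < 1 - Real.exp (-(α₂/2)) := by
    have : Real.exp (-(α₂/2)) < 1 := Real.exp_lt_one_iff.2 (by linarith)
    linarith
  refine ⟨1 + C₂ * Real.exp ((2*s)^2/(2*α₂)) * (1 - Real.exp (-(α₂/2)))⁻¹, ?_, ?_⟩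
  · have h1 : 0 ≤ C₂ * Real.exp ((2*s)^2/(2*α₂)) * (1 - Real.exp (-(α₂/2)))⁻¹ :=
      mul_nonneg (mul_nonneg (by linarith) (Real.exp_pos _).le) (inv_nonneg.2 hr2pos.le)
    linarith
  intro N hN t ht Θ _ P _ V hVm hVind hVid hVbd G Ginv a b hab hG hGbij hGinvG hGinvmem hder
  obtain ⟨htε, htε'⟩ := ht
  have ht0 : 0 < t := lt_trans hε0 htε
  have ht1 : t < 1 := by linarith
  have hNR : 0 < (N:ℝ) := by exact_mod_cast hN
  set ℓ : ℕ := ⌈(N : ℝ) * t⌉₊ with hℓ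
  have hℓ1 : 1 ≤ ℓ := Nat.one_le_ceil_iff.2 (by positivity)
  have hℓN : ℓ ≤ N := by
    rw [hℓ]
    apply Nat.ceil_le.2
    calc (N:ℝ) * t ≤ (N:ℝ) * 1 := mul_le_mul_of_nonneg_left ht1.le hNR.le
      _ = (N:ℝ) := mul_one _
  have hℓub : ((ℓ:ℝ)) < (N:ℝ) * t + 1 := by
    rw [hℓ]
    exact Nat.ceil_lt_add_one (by positivity)
  have hℓlb : (N:ℝ) * t ≤ (ℓ:ℝ) := by
    rw [hℓ]
    exact Nat.le_ceil _
  set X : Θ → ℝ := fun ω => orderStat (fun j => V j ω) ℓ with hX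
  have hXm : Measurable X := measurable_orderStat hℓ1 hℓN V hVm
  have hXkey : ∀ ω, (∃ j, X ω = V j ω) ∧
      ∀ x : ℝ, X ω ≤ x ↔ ℓ ≤ (Finset.univ.filter fun j => V j ω ≤ x).card := by
    intro ω
    obtain ⟨j, hj, hiff⟩ := orderStat_key (fun j => V j ω) hℓ1 hℓN
    exact ⟨⟨j, hj⟩, hiff⟩
  have hVbd' : ∀ᵐ ω ∂P, ∀ j, |V j ω| ≤ M := (ae_all_iff).2 hVbd
  have hXbd : ∀ᵐ ω ∂P, |X ω| ≤ M := by
    filter_upwards [hVbd'] with ω hω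
    obtain ⟨j, hj⟩ := (hXkey ω).1
    rw [hj]
    exact hω j
  have hXint : Integrable X P := by
    refine Integrable.mono' (integrable_const M) hXm.aestronglyMeasurable ?_
    filter_upwards [hXbd] with ω hω
    rwa [Real.norm_eq_abs]
  -- identical distribution of events
  have hPy : ∀ (j : Fin N) (y : ℝ), (P {ω | V j ω ≤ y}).toReal = G y := by
    intro j y
    have h1 : {ω | V j ω ≤ y} = V j ⁻¹' (Set.Iic y) := rfl
    have h2 : {ω | V ⟨0, hN⟩ ω ≤ y} = V ⟨0, hN⟩ ⁻¹' (Set.Iic y) := rfl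
    rw [hG y, h1, h2, ← Measure.map_apply (hVm j) measurableSet_Iic,
      ← Measure.map_apply (hVm ⟨0, hN⟩) measurableSet_Iic, hVid j ⟨0, hN⟩]
  have hGmono : Monotone G := by
    intro x y hxy
    rw [hG x, hG y]
    refine ENNReal.toReal_mono (measure_ne_top _ _) (measure_mono ?_)
    intro ω hω
    exact le_trans hω hxy
  have hGrange : ∀ y, 0 ≤ G y ∧ G y ≤ 1 := by
    intro y
    rw [hG y]
    constructor
    · exact ENNReal.toReal_nonneg
    · rw [← ENNReal.toReal_one]
      exact ENNReal.toReal_mono (by norm_num) prob_le_one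
  -- (a,b) ⊆ [-M,M]
  have hPnulllt : ∀ z : ℝ, z < -M → P {ω | V ⟨0, hN⟩ ω ≤ z} = 0 := by
    intro z hz
    have hnull : P {ω | ¬ |V ⟨0, hN⟩ ω| ≤ M} = 0 := by
      have := hVbd ⟨0, hN⟩
      rwa [ae_iff] at this
    refine measure_mono_null ?_ hnull
    intro ω hω
    simp only [Set.mem_setOf_eq] at hω ⊢
    intro habs
    have := abs_le.1 habs
    linarith
  have hPonege : ∀ z : ℝ, M ≤ z → P {ω | V ⟨0, hN⟩ ω ≤ z} = 1 := by
    intro z hz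
    have hnull : P {ω | ¬ |V ⟨0, hN⟩ ω| ≤ M} = 0 := by
      have := hVbd ⟨0, hN⟩
      rwa [ae_iff] at this
    have hsub : {ω | V ⟨0, hN⟩ ω ≤ z}ᶜ ⊆ {ω | ¬ |V ⟨0, hN⟩ ω| ≤ M} := by
      intro ω hω
      simp only [Set.mem_compl_iff, Set.mem_setOf_eq, not_le] at hω ⊢
      linarith [le_abs_self (V ⟨0, hN⟩ ω)]
    have hc : P {ω | V ⟨0, hN⟩ ω ≤ z}ᶜ = 0 := measure_mono_null hsub hnull
    have hms : MeasurableSet {ω | V ⟨0, hN⟩ ω ≤ z} :=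
      measurableSet_le (hVm _) measurable_const
    exact (prob_compl_eq_zero_iff hms).1 hc
  have habM : ∀ z ∈ Set.Ioo a b, |z| ≤ M := by
    intro z hz
    have hGz := hGbij.mapsTo hz
    rw [abs_le]
    constructor
    · by_contra hlt
      push_neg at hlt
      have h0 : G z = 0 := by
        rw [hG z]
        rw [hPnulllt z (by linarith)]
        simp
      rw [h0] at hGz
      exact absurd hGz.1 (lt_irrefl 0)
    · by_contra hlt
      push_neg at hlt
      have h1 : G z = 1 := by
        rw [hG z, hPonege z (by linarith)]
        simp
      rw [h1] at hGz
      exact absurd hGz.2 (lt_irrefl 1)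
  -- the quantile
  obtain ⟨hqab, hGq⟩ := hGinvmem t ⟨ht0, ht1⟩
  set q : ℝ := Ginv t with hq
  have hqM : |q| ≤ M := habM q hqab
  -- Lipschitz bound for Ginv on (δ, 1-δ)
  have hLip : ∀ u ∈ Set.Ioo δ (1-δ), ∀ u' ∈ Set.Ioo δ (1-δ),
      |Ginv u - Ginv u'| ≤ c2 * |u - u'| := by
    intro u hu u' hu'
    have := Convex.norm_image_sub_le_of_norm_deriv_le (𝕜 := ℝ) (f := Ginv)
      (s := Set.Ioo δ (1-δ)) (fun x hx => (hder x hx).1)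
      (fun x hx => by rw [Real.norm_eq_abs]; exact (hder x hx).2.2.1)
      (convex_Ioo _ _) hu' hu
    simpa [Real.norm_eq_abs] using this
  have htIoo : t ∈ Set.Ioo δ (1-δ) := ⟨lt_trans hδε htε, by linarith⟩
  have hc2pos : 0 < c2 := by
    by_contra hle
    push_neg at hle
    have hu₁ : (1/2 : ℝ) ∈ Set.Ioo δ (1-δ) := ⟨by linarith, by linarith⟩
    have hu₂ : ((δ + 1/2)/2 : ℝ) ∈ Set.Ioo δ (1-δ) := ⟨by linarith, by linarith⟩
    have h12 := hLip (1/2) hu₁ ((δ + 1/2)/2) hu₂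
    have heq : Ginv (1/2) = Ginv ((δ + 1/2)/2) := by
      have hnn : (0:ℝ) ≤ |Ginv (1/2) - Ginv ((δ + 1/2)/2)| := abs_nonneg _
      have : c2 * |1/2 - (δ + 1/2)/2| ≤ 0 :=
        mul_nonpos_of_nonpos_of_nonneg hle (abs_nonneg _)
      have := le_antisymm (h12.trans this) hnn
      rwa [abs_eq_zero, sub_eq_zero] at this
    have h1 : G (Ginv (1/2)) = 1/2 := (hGinvmem (1/2) ⟨by linarith, by linarith⟩).2
    have h2 : G (Ginv ((δ + 1/2)/2)) = (δ + 1/2)/2 :=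
      (hGinvmem ((δ + 1/2)/2) ⟨by linarith, by linarith⟩).2
    rw [heq, h2] at h1
    linarith
  have hc2le : c2 ≤ c2' := le_max_left _ _
  have hα₁c2 : α₁ ≤ 1/(4*c2^2) := by
    have h0 : c2^2 ≤ c2'^2 := pow_le_pow_left₀ hc2pos.le hc2le 2
    have h1 : (4:ℝ)*c2^2 ≤ 4*c2'^2 := by linarith [h0]
    calc α₁ ≤ 1/(4*c2'^2) := min_le_left _ _
      _ ≤ 1/(4*c2^2) := one_div_le_one_div_of_le (by positivity) h1
  set x₀ : ℝ := c2 * (ε-δ)/2 with hx₀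
  have hx₀pos : 0 < x₀ := by positivity
  have hx0c2 : x₀/c2 = (ε-δ)/2 := by field_simp; ring
  -- Chernoff for the upper deviation, small x
  have chern_up : ∀ x : ℝ, 0 < x → x ≤ x₀ →
      (P {ω | q + x < X ω}).toReal ≤ Real.exp (-(N:ℝ) * (x/c2)^2 / 4) := by
    intro x hx hxx₀
    have hxc2 : x/c2 ≤ (ε-δ)/2 := by
      rw [div_le_iff₀ hc2pos]
      rw [hx₀] at hxx₀
      linarith
    have hxc2pos : 0 < x/c2 := by positivity
    set u : ℝ := t + x/c2 with hu
    have huIoo : u ∈ Set.Ioo δ (1-δ) := by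
      constructor
      · rw [hu]; linarith
      · rw [hu]; linarith
    have hu01 : u ∈ Set.Ioo (0:ℝ) 1 := by
      constructor
      · rw [hu]; linarith
      · have := huIoo.2; linarith
    obtain ⟨huab, hGu⟩ := hGinvmem u hu01
    have hGinvle : Ginv u ≤ q + x := by
      have hlip := hLip u huIoo t htIoo
      have habs : |u - t| = x/c2 := by
        rw [hu]
        rw [show t + x/c2 - t = x/c2 by ring, abs_of_pos hxc2pos]
      rw [habs] at hlip
      rw [← hq] at hlip
      have h2 : c2 * (x/c2) = x := by field_simp
      have h3 := le_abs_self (Ginv u - q)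
      linarith [hlip, h3]
    have hup : u ≤ G (q + x) := by
      have := hGmono hGinvle
      rwa [hGu] at this
    have hev : {ω | q + x < X ω} =
        {ω | ((Finset.univ.filter fun j => V j ω ≤ q + x).card : ℝ) ≤ (ℓ:ℝ) - 1} := by
      ext ω
      simp only [Set.mem_setOf_eq]
      rw [← not_le, (hXkey ω).2 (q+x), not_le]
      constructor
      · intro hlt
        have h1 : (Finset.univ.filter fun j => V j ω ≤ q + x).card + 1 ≤ ℓ := hlt
        have h2 : (((Finset.univ.filter fun j => V j ω ≤ q + x).card + 1 : ℕ) : ℝ) ≤ (ℓ:ℝ) :=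
          Nat.cast_le.2 h1
        push_cast at h2
        linarith
      · intro hle
        have h2 : (((Finset.univ.filter fun j => V j ω ≤ q + x).card + 1 : ℕ) : ℝ) ≤ (ℓ:ℝ) := by
          push_cast
          linarith
        exact Nat.cast_le.1 h2
    rw [hev]
    have hbt := (binom_tail P V hVm hVind (q+x) (G (q+x)) (fun j => hPy j (q+x))
      (hGrange _).1 (hGrange _).2 (x/c2) hxc2pos.le (by linarith) ((ℓ:ℝ) - 1)).2
    apply hbt
    have h3 : (N:ℝ) * u ≤ (N:ℝ) * G (q+x) := mul_le_mul_of_nonneg_left hup hNR.le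
    rw [hu] at h3
    have h4 : (N:ℝ) * (t + x/c2) = (N:ℝ)*t + (N:ℝ)*(x/c2) := by ring
    rw [h4] at h3
    linarith
  -- Chernoff for the lower deviation, small x
  have chern_low : ∀ x : ℝ, 0 < x → x ≤ x₀ →
      (P {ω | X ω < q - x}).toReal ≤ Real.exp (-(N:ℝ) * (x/c2)^2 / 4) := by
    intro x hx hxx₀
    have hxc2 : x/c2 ≤ (ε-δ)/2 := by
      rw [div_le_iff₀ hc2pos]
      rw [hx₀] at hxx₀
      linarith
    have hxc2pos : 0 < x/c2 := by positivity
    set u : ℝ := t - x/c2 with hu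
    have huIoo : u ∈ Set.Ioo δ (1-δ) := by
      constructor
      · rw [hu]; linarith
      · rw [hu]; linarith
    have hu01 : u ∈ Set.Ioo (0:ℝ) 1 := by
      constructor
      · have := huIoo.1; linarith
      · have := huIoo.2; linarith
    obtain ⟨huab, hGu⟩ := hGinvmem u hu01
    have hGinvge : q - x ≤ Ginv u := by
      have hlip := hLip t htIoo u huIoo
      have habs : |t - u| = x/c2 := by
        rw [hu, show t - (t - x/c2) = x/c2 by ring, abs_of_pos hxc2pos]
      rw [habs] at hlip
      rw [← hq] at hlip
      have h2 : c2 * (x/c2) = x := by field_simp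
      have h3 := le_abs_self (q - Ginv u)
      linarith [hlip, h3]
    have hlow : G (q - x) ≤ u := by
      have := hGmono hGinvge
      rwa [hGu] at this
    have hsub : {ω | X ω < q - x} ⊆
        {ω | (ℓ:ℝ) ≤ ((Finset.univ.filter fun j => V j ω ≤ q - x).card : ℝ)} := by
      intro ω hω
      simp only [Set.mem_setOf_eq] at hω ⊢
      have h1 : X ω ≤ q - x := hω.le
      have h2 := ((hXkey ω).2 (q-x)).1 h1
      exact_mod_cast h2
    have hbt := (binom_tail P V hVm hVind (q-x) (G (q-x)) (fun j => hPy j (q-x))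
      (hGrange _).1 (hGrange _).2 (x/c2) hxc2pos.le (by linarith) ((ℓ:ℝ))).1
    refine le_trans (ENNReal.toReal_mono (measure_ne_top _ _) (measure_mono hsub)) (hbt ?_)
    have h3 : (N:ℝ) * G (q-x) ≤ (N:ℝ) * u := mul_le_mul_of_nonneg_left hlow hNR.le
    rw [hu] at h3
    have h4 : (N:ℝ) * (t - x/c2) = (N:ℝ)*t - (N:ℝ)*(x/c2) := by ring
    rw [h4] at h3
    linarith
  -- exponent comparisons
  have hexp_small : ∀ x : ℝ, 0 < x →
      Real.exp (-(N:ℝ) * (x/c2)^2 / 4) ≤ Real.exp (-(α₁ * N * x^2)) := by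
    intro x hx
    apply Real.exp_le_exp.2
    have h1 : α₁ * x^2 ≤ x^2/c2^2/4 := by
      calc α₁ * x^2 ≤ (1/(4*c2^2)) * x^2 :=
            mul_le_mul_of_nonneg_right hα₁c2 (sq_nonneg x)
        _ = x^2/c2^2/4 := by ring
    have h2 := mul_le_mul_of_nonneg_left h1 hNR.le
    rw [div_pow]
    linarith [h2]
  have hexp_flat : ∀ x : ℝ, x₀ < x → x ≤ 2*M →
      Real.exp (-(N:ℝ) * (x₀/c2)^2 / 4) ≤ Real.exp (-(α₁ * N * x^2)) := by
    intro x hxx₀ hx2M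
    apply Real.exp_le_exp.2
    have h4 : α₁ ≤ (ε-δ)^2/(144*M^2) := min_le_right _ _
    have h5 : x^2 ≤ 4*M^2 := by
      have h5' : x^2 ≤ (2*M)^2 := sq_le_sq' (by linarith) hx2M
      linarith [h5', sq_nonneg M]
    have h6 : α₁ * x^2 ≤ (ε-δ)^2/36 := by
      calc α₁ * x^2 ≤ ((ε-δ)^2/(144*M^2)) * (4*M^2) :=
            mul_le_mul h4 h5 (sq_nonneg x) (by positivity)
        _ = (ε-δ)^2/36 := by field_simp; ring
    have h7 := mul_le_mul_of_nonneg_left h6 hNR.le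
    have h8 : (N:ℝ)*((ε-δ)^2/36) ≤ (N:ℝ)*(((ε-δ)/2)^2/4) := by
      apply mul_le_mul_of_nonneg_left _ hNR.le
      linarith [sq_nonneg (ε-δ)]
    rw [hx0c2]
    linarith [h7, h8]
  -- upper deviation bound, all x
  have hupper : ∀ x : ℝ, 0 < x →
      (P {ω | q + x < X ω}).toReal ≤ Real.exp (-(α₁ * N * x^2)) := by
    intro x hx
    by_cases hc : x ≤ x₀
    · exact (chern_up x hx hc).trans (hexp_small x hx)
    · push_neg at hc
      by_cases hc2M : x ≤ 2*M
      · have hsub : {ω | q + x < X ω} ⊆ {ω | q + x₀ < X ω} := by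
          intro ω hω
          simp only [Set.mem_setOf_eq] at hω ⊢
          linarith
        calc (P {ω | q + x < X ω}).toReal
            ≤ (P {ω | q + x₀ < X ω}).toReal :=
              ENNReal.toReal_mono (measure_ne_top _ _) (measure_mono hsub)
          _ ≤ Real.exp (-(N:ℝ) * (x₀/c2)^2 / 4) := chern_up x₀ hx₀pos le_rfl
          _ ≤ Real.exp (-(α₁ * N * x^2)) := hexp_flat x hc hc2M
      · push_neg at hc2M
        have hnull : P {ω | q + x < X ω} = 0 := by
          have hXnull : P {ω | ¬ |X ω| ≤ M} = 0 := by
            have := hXbd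
            rwa [ae_iff] at this
          refine measure_mono_null ?_ hXnull
          intro ω hω
          simp only [Set.mem_setOf_eq, not_le] at hω ⊢
          have hqge : -M ≤ q := (abs_le.1 hqM).1
          have h1 : M < X ω := by linarith
          linarith [le_abs_self (X ω)]
        rw [hnull]
        simp only [ENNReal.toReal_zero]
        exact (Real.exp_pos _).le
  have hlower : ∀ x : ℝ, 0 < x →
      (P {ω | X ω < q - x}).toReal ≤ Real.exp (-(α₁ * N * x^2)) := by
    intro x hx
    by_cases hc : x ≤ x₀
    · exact (chern_low x hx hc).trans (hexp_small x hx)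
    · push_neg at hc
      by_cases hc2M : x ≤ 2*M
      · have hsub : {ω | X ω < q - x} ⊆ {ω | X ω < q - x₀} := by
          intro ω hω
          simp only [Set.mem_setOf_eq] at hω ⊢
          linarith
        calc (P {ω | X ω < q - x}).toReal
            ≤ (P {ω | X ω < q - x₀}).toReal :=
              ENNReal.toReal_mono (measure_ne_top _ _) (measure_mono hsub)
          _ ≤ Real.exp (-(N:ℝ) * (x₀/c2)^2 / 4) := chern_low x₀ hx₀pos le_rfl
          _ ≤ Real.exp (-(α₁ * N * x^2)) := hexp_flat x hc hc2M
      · push_neg at hc2M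
        have hnull : P {ω | X ω < q - x} = 0 := by
          have hXnull : P {ω | ¬ |X ω| ≤ M} = 0 := by
            have := hXbd
            rwa [ae_iff] at this
          refine measure_mono_null ?_ hXnull
          intro ω hω
          simp only [Set.mem_setOf_eq, not_le] at hω ⊢
          have hqle : q ≤ M := (abs_le.1 hqM).2
          have h1 : X ω < -M := by linarith
          linarith [neg_abs_le (X ω)]
        rw [hnull]
        simp only [ENNReal.toReal_zero]
        exact (Real.exp_pos _).le
  have htailX : ∀ x : ℝ, 0 < x →
      (P {ω | x < |X ω - q|}).toReal ≤ 2 * Real.exp (-(α₁ * N * x^2)) := by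
    intro x hx
    have hsub : {ω | x < |X ω - q|} ⊆ {ω | q + x < X ω} ∪ {ω | X ω < q - x} := by
      intro ω hω
      simp only [Set.mem_setOf_eq, Set.mem_union] at hω ⊢
      rcases lt_abs.1 hω with h | h
      · left; linarith
      · right; linarith
    have hm := measure_union_le (μ := P) {ω | q + x < X ω} {ω | X ω < q - x}
    calc (P {ω | x < |X ω - q|}).toReal
        ≤ (P ({ω | q + x < X ω} ∪ {ω | X ω < q - x})).toReal :=
          ENNReal.toReal_mono (measure_ne_top _ _) (measure_mono hsub)
      _ ≤ (P {ω | q + x < X ω} + P {ω | X ω < q - x}).toReal :=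
          ENNReal.toReal_mono
            (ENNReal.add_ne_top.2 ⟨measure_ne_top _ _, measure_ne_top _ _⟩) hm
      _ = (P {ω | q + x < X ω}).toReal + (P {ω | X ω < q - x}).toReal :=
          ENNReal.toReal_add (measure_ne_top _ _) (measure_ne_top _ _)
      _ ≤ Real.exp (-(α₁ * N * x^2)) + Real.exp (-(α₁ * N * x^2)) :=
          add_le_add (hupper x hx) (hlower x hx)
      _ = 2 * Real.exp (-(α₁ * N * x^2)) := by ring
  have probToReal : ∀ S : Set Θ, (P S).toReal ≤ 1 := fun S => by
    rw [← ENNReal.toReal_one]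
    exact ENNReal.toReal_mono (by norm_num) prob_le_one
  -- first absolute moment of X - q
  have hYm1 : Measurable (fun ω => X ω - q) := hXm.sub measurable_const
  have hbd1 : ∀ᵐ ω ∂P, |X ω - q| ≤ 2*M := by
    filter_upwards [hXbd] with ω hω
    have h1 := abs_le.1 hω
    have h2 := abs_le.1 hqM
    rw [abs_le]
    constructor <;> [linarith [h1.1, h2.2]; linarith [h1.2, h2.1]]
  have hmom1 := moment_from_tail P (fun ω => X ω - q) hYm1 hN (2*M) 2 α₁ 1
    (by positivity) (by norm_num) hα₁0 le_rfl hbd1 (fun x hx => htailX x hx)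
  set EX : ℝ := ∫ ω, X ω ∂P with hEX
  have hdEq : |EX - q| ≤ c₁ * (N:ℝ)^(-(1/2) : ℝ) := by
    have h1 : ∫ ω, (X ω - q) ∂P = EX - q := by
      rw [integral_sub hXint (integrable_const q), integral_const]
      simp [hEX]
    have h2 : |∫ ω, (X ω - q) ∂P| ≤ ∫ ω, |X ω - q| ∂P := by
      simpa [Real.norm_eq_abs] using
        norm_integral_le_integral_norm (μ := P) (fun ω => X ω - q)
    have h3 : ∫ ω, |X ω - q| ∂P = ∫ ω, |X ω - q| ^ (1:ℝ) ∂P := by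
      simp [Real.rpow_one]
    rw [h1, h3] at h2
    refine h2.trans ?_
    rw [hc₁]
    exact hmom1
  set d : ℝ := c₁ * (N:ℝ)^(-(1/2) : ℝ) with hd
  have hN1 : (1:ℝ) ≤ (N:ℝ) := by exact_mod_cast hN
  have hd0 : 0 < d := by
    rw [hd]
    positivity
  have hNhalf : ((N:ℝ)^(-(1/2) : ℝ))^2 = (N:ℝ)⁻¹ := by
    rw [← Real.rpow_natCast ((N:ℝ)^(-(1/2) : ℝ)) 2, ← Real.rpow_mul hNR.le]
    norm_num [Real.rpow_neg_one]
  have hNd : (N:ℝ) * d^2 = c₁^2 := by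
    rw [hd, mul_pow, hNhalf]
    field_simp
  have hdle : d ≤ c₁ := by
    rw [hd]
    have h1 : (N:ℝ)^(-(1/2) : ℝ) ≤ 1 :=
      Real.rpow_le_one_of_one_le_of_nonpos hN1 (by norm_num)
    calc c₁ * (N:ℝ)^(-(1/2) : ℝ) ≤ c₁ * 1 := mul_le_mul_of_nonneg_left h1 hc₁0.le
      _ = c₁ := mul_one _
  -- tail bound for X - E X
  have htailY : ∀ x : ℝ, 0 < x →
      (P {ω | x < |X ω - EX|}).toReal ≤ C₂ * Real.exp (-(α₂ * N * x^2)) := by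
    intro x hx
    by_cases hc : x ≤ 2*d
    · have hx2 : (N:ℝ) * x^2 ≤ 4*c₁^2 := by
        have h1 : x^2 ≤ (2*d)^2 := sq_le_sq' (by linarith) hc
        have h2 : (N:ℝ) * x^2 ≤ (N:ℝ) * (4*d^2) := by
          apply mul_le_mul_of_nonneg_left _ hNR.le
          linarith [h1]
        calc (N:ℝ)*x^2 ≤ (N:ℝ)*(4*d^2) := h2
          _ = 4*((N:ℝ)*d^2) := by ring
          _ = 4*c₁^2 := by rw [hNd]
      have hexp2 : Real.exp (-(4*α₂*c₁^2)) ≤ Real.exp (-(α₂ * N * x^2)) := by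
        apply Real.exp_le_exp.2
        have h3 := mul_le_mul_of_nonneg_left hx2 hα₂0.le
        linarith [h3]
      have e1 : C₂ * Real.exp (-(4*α₂*c₁^2)) = 2 := by
        rw [hC₂, mul_assoc, ← Real.exp_add]
        norm_num
      have h1le : (1:ℝ) ≤ C₂ * Real.exp (-(α₂ * N * x^2)) := by
        have h4 : C₂ * Real.exp (-(4*α₂*c₁^2)) ≤ C₂ * Real.exp (-(α₂ * N * x^2)) :=
          mul_le_mul_of_nonneg_left hexp2 (by linarith)
        rw [e1] at h4
        linarith
      exact (probToReal _).trans h1le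
    · push_neg at hc
      have hxd : 0 < x - d := by linarith
      have hsub : {ω | x < |X ω - EX|} ⊆ {ω | x - d < |X ω - q|} := by
        intro ω hω
        simp only [Set.mem_setOf_eq] at hω ⊢
        have h1 : |X ω - EX| ≤ |X ω - q| + |EX - q| := by
          have e : X ω - EX = (X ω - q) + (-(EX - q)) := by ring
          rw [e]
          refine le_trans (abs_add_le _ _) ?_
          rw [abs_neg]
        linarith [hdEq, hω, h1]
      calc (P {ω | x < |X ω - EX|}).toReal
          ≤ (P {ω | x - d < |X ω - q|}).toReal :=
            ENNReal.toReal_mono (measure_ne_top _ _) (measure_mono hsub)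
        _ ≤ 2 * Real.exp (-(α₁ * N * (x-d)^2)) := htailX (x-d) hxd
        _ ≤ C₂ * Real.exp (-(α₂ * N * x^2)) := by
            have hC2ge2 : 2 ≤ C₂ := by
              rw [hC₂]
              have h5 : 1 ≤ Real.exp (4*α₂*c₁^2) := Real.one_le_exp (by positivity)
              linarith
            have hexp3 : Real.exp (-(α₁ * N * (x-d)^2)) ≤ Real.exp (-(α₂ * N * x^2)) := by
              apply Real.exp_le_exp.2
              have hsq : (x/2)^2 ≤ (x-d)^2 :=
                pow_le_pow_left₀ (by positivity) (by linarith) 2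
              have h6 := mul_le_mul_of_nonneg_left hsq
                (mul_nonneg hα₁0.le hNR.le)
              rw [hα₂]
              linarith [h6]
            exact mul_le_mul hC2ge2 hexp3 (Real.exp_pos _).le (by linarith)
  -- final moment bound
  have hbdY : ∀ᵐ ω ∂P, |X ω - EX| ≤ 2*M + c₁ := by
    filter_upwards [hbd1] with ω hω
    have e : X ω - EX = (X ω - q) + (-(EX - q)) := by ring
    rw [e]
    refine le_trans (abs_add_le _ _) ?_
    rw [abs_neg]
    have := hdEq
    linarith [hω, hdEq, hdle]
  have hfin := moment_from_tail P (fun ω => X ω - EX) (hXm.sub measurable_const) hN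
    (2*M + c₁) C₂ α₂ (2*s) (by positivity) hC₂1 hα₂0 (by linarith) hbdY
    (fun x hx => htailY x hx)
  have hNs : (N:ℝ) ^ (-(2*s/2)) = (N:ℝ) ^ (-s) := by
    norm_num
  rw [hNs] at hfin
  exact hfin

end
end

section
/- Let b and c be real numbers with b > 1 and 1 < c ≤ 2, and define a = max( (b + bc/2)/(bc+1), (2b − 1)/(bc+1), (4b − bc − 2)/(bc+1) ) if b(1 − c/2) ≤ 3/4, and a = max( (b + bc/2)/(bc+1), (2b − 1/2)/(bc+1) ) if b(1 − c/2) > 3/4. Then a < b(c+1)/(bc+1). -/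
/-- For `b > 1` and `1 < c ≤ 2`, the exponent `a` of the paper's minimax theorem
(defined piecewise according to whether `b(1 − c/2) ≤ 3/4`) is strictly smaller than the
exponent `b(c+1)/(bc+1)` required in earlier state-of-the-art results. -/
theorem statement13 (b c : ℝ) (hb : 1 < b) (hc1 : 1 < c) (hc2 : c ≤ 2) :
    (if b * (1 - c / 2) ≤ 3 / 4 then
        max (max ((b + b * c / 2) / (b * c + 1)) ((2 * b - 1) / (b * c + 1)))
          ((4 * b - b * c - 2) / (b * c + 1))
      else
        max ((b + b * c / 2) / (b * c + 1)) ((2 * b - 1 / 2) / (b * c + 1)))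
      < b * (c + 1) / (b * c + 1) := by
  have hd : (0:ℝ) < b * c + 1 := by nlinarith
  have hbc : b < b * c := by nlinarith
  split_ifs with h
  · apply max_lt (max_lt _ _) <;> try skip
    · rw [div_lt_div_iff_of_pos_right hd]; nlinarith
    · rw [div_lt_div_iff_of_pos_right hd]; nlinarith
    · rw [div_lt_div_iff_of_pos_right hd]; nlinarith
  · apply max_lt
    · rw [div_lt_div_iff_of_pos_right hd]; nlinarith
    · rw [div_lt_div_iff_of_pos_right hd]; nlinarith
end
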